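/- arXiv:2605.28529 — 8 statements merged into one kernel-verified Lean document; each statement's English description precedes it below -/
import Mathlib

section
/- For the unanimity game u_T with T nonempty, the Shapley interaction index satisfies SI^{u_T}(S) = 1/(|T|-|S|+1) if S ⊆ T, and SI^{u_T}(S) = 0 otherwise. -/
open Finset

noncomputable section
open scoped Classical

namespace TUGame

variable {ι : Type*} [Fintype ι] [DecidableEq ι]

/-- Harsanyi dividend of coalition `T` in game `v`. -/
def dividend (v : Finset ι → ℝ) (T : Finset ι) : ℝ :=
  ∑ R ∈ T.powerset, (-1 : ℝ) ^ (T.card - R.card) * v R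

/-- Unanimity game of coalition `T`. -/
def unanimity (T S : Finset ι) : ℝ := if T ⊆ S then 1 else 0

/-- Shapley value of player `i` in game `v`. -/
def shapley (v : Finset ι → ℝ) (i : ι) : ℝ :=
  ∑ S ∈ Finset.univ.powerset.filter (fun S => i ∈ S),
    (((S.card - 1).factorial * (Fintype.card ι - S.card).factorial : ℕ) : ℝ) /
      (((Fintype.card ι).factorial : ℕ) : ℝ) * (v S - v (S.erase i))

/-- Shapley interaction index, defined via discrete derivatives. -/
def SIderiv (v : Finset ι → ℝ) (S : Finset ι) : ℝ :=
  ∑ T ∈ (Finset.univ \ S).powerset,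
    (((Fintype.card ι - T.card - S.card).factorial * T.card.factorial : ℕ) : ℝ) /
      (((Fintype.card ι - S.card + 1).factorial : ℕ) : ℝ) *
    ∑ L ∈ S.powerset, (-1 : ℝ) ^ (S.card - L.card) * v (T ∪ L)

/-- Shapley interaction index, expressed via Harsanyi dividends. -/
def SIdiv (v : Finset ι → ℝ) (S : Finset ι) : ℝ :=
  ∑ T ∈ Finset.univ.powerset.filter (fun T => S ⊆ T),
    dividend v T / ((T.card - S.card + 1 : ℕ) : ℝ)

/-- The subgraph of `G` induced by the coalition `S` (as a graph on the same vertex set). -/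
def restrict (G : SimpleGraph ι) (S : Finset ι) : SimpleGraph ι where
  Adj i j := G.Adj i j ∧ i ∈ S ∧ j ∈ S
  symm := ⟨fun i j h => ⟨h.1.symm, h.2.2, h.2.1⟩⟩
  loopless := ⟨fun i h => G.loopless.irrefl i h.1⟩

/-- Connected component of `i` in the subgraph induced by `S`. -/
def comp (G : SimpleGraph ι) (S : Finset ι) (i : ι) : Finset ι :=
  S.filter fun j => (restrict G S).Reachable i j

/-- Connected component of `i` in `G`. -/
def component (G : SimpleGraph ι) (i : ι) : Finset ι := comp G Finset.univ i

/-- Myerson graph-restricted game: sum of `v` over the connected components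
of the subgraph induced by `S`. -/
def restrictedGame (G : SimpleGraph ι) (v : Finset ι → ℝ) (S : Finset ι) : ℝ :=
  ∑ C ∈ S.image (comp G S), v C

/-- Myerson interaction index. -/
def MI (G : SimpleGraph ι) (v : Finset ι → ℝ) (S : Finset ι) : ℝ :=
  SIdiv (restrictedGame G v) S

/-- The subgraph induced by `S` is connected. -/
def ConnectedOn (G : SimpleGraph ι) (S : Finset ι) : Prop :=
  ∀ i ∈ S, ∀ j ∈ S, (restrict G S).Reachable i j

/-- `R` is a minimal `T`-connecting set of nodes in `G`. -/
def MinimalConnecting (G : SimpleGraph ι) (T R : Finset ι) : Prop :=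
  T ⊆ R ∧ ConnectedOn G R ∧ ∀ R' ⊂ R, ¬ (T ⊆ R' ∧ ConnectedOn G R')

/-- `i` is an intermediary of `T` in `G`. -/
def Intermediary (G : SimpleGraph ι) (T : Finset ι) (i : ι) : Prop :=
  ∃ R, MinimalConnecting G T R ∧ i ∈ R ∧ i ∉ T

/-- `i` is an essential intermediary of `T` in `G`. -/
def EssentialIntermediary (G : SimpleGraph ι) (T : Finset ι) (i : ι) : Prop :=
  i ∉ T ∧ ∀ R, MinimalConnecting G T R → i ∈ R

/-- `i` is a null player in game `v`. -/
def NullPlayer (v : Finset ι → ℝ) (i : ι) : Prop :=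
  ∀ S : Finset ι, i ∉ S → v (insert i S) = v S

/-- `i` is a graph null player in the communication situation `(N, v, G)`. -/
def GraphNull (G : SimpleGraph ι) (v : Finset ι → ℝ) (i : ι) : Prop :=
  NullPlayer v i ∧
    ∀ j k : ι, j ≠ k → j ≠ i → k ≠ i → Intermediary G {j, k} i →
      NullPlayer v j ∨ NullPlayer v k

/-- `P` is a veto partnership in game `v`. -/
def VetoPartnership (v : Finset ι → ℝ) (P : Finset ι) : Prop :=
  P.Nonempty ∧ ∀ T : Finset ι, T ⊆ Finset.univ \ P →
    v T = 0 ∧ ∀ S ⊂ P, v (T ∪ S) = 0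

/-- `GP` is a veto graph partnership in `(N, v, G)`. -/
def VetoGraphPartnership (G : SimpleGraph ι) (v : Finset ι → ℝ) (GP : Finset ι) : Prop :=
  GP.Nonempty ∧ ∃ P, VetoPartnership v P ∧
    ∀ i ∈ GP, i ∈ P ∨ EssentialIntermediary G P i

/-- Cutnodes of `S`: nodes of `S` whose removal disconnects the induced subgraph on `S`. -/
def cutnodes (G : SimpleGraph ι) (S : Finset ι) : Finset ι :=
  S.filter fun i => ¬ ConnectedOn G (S.erase i)

end TUGame

open TUGame


section SIHelpers
open Finset
variable {ι : Type*} [Fintype ι] [DecidableEq ι]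

lemma SI_key_nat (a : ℕ) : ∀ d : ℕ, (a+1) * ∑ j ∈ Finset.range (d+1),
    d.choose j * ((a+j).factorial * (d-j).factorial) = (a+d+1).factorial := by
  intro d
  induction d with
  | zero => simp [Nat.factorial_succ]
  | succ d ih =>
    have step : (∑ j ∈ Finset.range (d+2), (d+1).choose j * ((a+j).factorial * (d+1-j).factorial))
        = (a+d+2) * ∑ j ∈ Finset.range (d+1), d.choose j * ((a+j).factorial * (d-j).factorial) := by
      rw [Finset.sum_range_succ'
        (fun j => (d+1).choose j * ((a+j).factorial * (d+1-j).factorial))]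
      have hA : ∀ i ∈ Finset.range (d+1),
          (d+1).choose (i+1) * ((a+(i+1)).factorial * (d+1-(i+1)).factorial)
          = (a+i+1) * (d.choose i * ((a+i).factorial * (d-i).factorial))
            + d.choose (i+1) * ((a+(i+1)).factorial * (d-i).factorial) := by
        intro i hi
        have h1 : d+1-(i+1) = d - i := by omega
        have h2 : (a+(i+1)).factorial = (a+i+1) * (a+i).factorial := by
          have h3 : a+(i+1) = (a+i)+1 := by ring
          rw [h3, Nat.factorial_succ]
        rw [Nat.choose_succ_succ, h1, h2]; ring
      rw [Finset.sum_congr rfl hA, Finset.sum_add_distrib]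
      have hB : (∑ i ∈ Finset.range (d+1),
            d.choose (i+1) * ((a+(i+1)).factorial * (d-i).factorial))
          + (d+1).choose 0 * ((a+0).factorial * (d+1-0).factorial)
          = ∑ j ∈ Finset.range (d+1), (d+1-j) * (d.choose j * ((a+j).factorial * (d-j).factorial)) := by
        have := (Finset.sum_range_succ'
          (fun j => d.choose j * ((a+j).factorial * (d+1-j).factorial)) (d+1)).symm
        rw [show ((d+1).choose 0 * ((a+0).factorial * (d+1-0).factorial))
            = d.choose 0 * ((a+0).factorial * (d+1-0).factorial) by norm_num]
        rw [show (∑ i ∈ Finset.range (d+1),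
              d.choose (i+1) * ((a+(i+1)).factorial * (d-i).factorial))
            = ∑ i ∈ Finset.range (d+1),
              d.choose (i+1) * ((a+(i+1)).factorial * (d+1-(i+1)).factorial) by
          refine Finset.sum_congr rfl fun i hi => ?_
          have h4 : d+1-(i+1) = d-i := by omega
          rw [h4]]
        rw [this, Finset.sum_range_succ]
        simp only [Nat.choose_succ_self, zero_mul, add_zero]
        refine Finset.sum_congr rfl fun j hj => ?_
        have hj' : j ≤ d := Nat.lt_succ_iff.mp (Finset.mem_range.mp hj)
        have : (d+1-j).factorial = (d+1-j) * (d-j).factorial := by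
          have : d+1-j = (d-j)+1 := by omega
          rw [this, Nat.factorial_succ]
        rw [this]; ring
      rw [add_assoc, hB, ← Finset.sum_add_distrib]
      rw [Finset.mul_sum]
      refine Finset.sum_congr rfl fun i hi => ?_
      have hi' : i ≤ d := Nat.lt_succ_iff.mp (Finset.mem_range.mp hi)
      have : (a+i+1) + (d+1-i) = a+d+2 := by omega
      rw [← add_mul, this]
    rw [show d+1+1 = d+2 from rfl, step, ← mul_assoc, mul_comm (a+1) (a+d+2), mul_assoc, ih,
      show a+(d+1)+1 = (a+d+1)+1 by ring, Nat.factorial_succ (a+d+1)]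

lemma SI_key_real (a d : ℕ) :
    ∑ j ∈ Finset.range (d+1),
      ((d.choose j : ℝ) * (((a+j).factorial : ℝ) * ((d-j).factorial : ℝ)))
        / (((a+d+1).factorial : ℕ) : ℝ)
    = 1 / ((a : ℝ) + 1) := by
  have h := SI_key_nat a d
  have h' := congrArg (Nat.cast : ℕ → ℝ) h
  push_cast at h'
  rw [← Finset.sum_div]
  have hF : (((a+d+1).factorial : ℕ) : ℝ) ≠ 0 := by
    exact_mod_cast (a+d+1).factorial_ne_zero
  have ha : ((a : ℝ) + 1) ≠ 0 := by positivity
  field_simp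
  rw [← h', mul_comm]
  congr 1
  refine Finset.sum_congr rfl fun x _ => ?_
  ring

lemma neg_one_pow_sub_real (k m : ℕ) (h : m ≤ k) :
    ((-1 : ℝ))^(k-m) = (-1)^k * (-1)^m := by
  have h2 : ((-1:ℝ))^(k-m) * (-1)^m = (-1)^k := by
    rw [← pow_add, Nat.sub_add_cancel h]
  have h3 : ((-1:ℝ))^m * (-1)^m = 1 := by
    rw [← pow_add, ← two_mul, pow_mul]; norm_num
  calc ((-1:ℝ))^(k-m) = (-1)^(k-m) * ((-1)^m * (-1)^m) := by rw [h3, mul_one]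
    _ = ((-1)^(k-m) * (-1)^m) * (-1)^m := by ring
    _ = (-1)^k * (-1)^m := by rw [h2]

omit [Fintype ι] in
lemma sum_powerset_neg_one_real (B : Finset ι) :
    (∑ M ∈ B.powerset, (-1 : ℝ)^M.card) = if B = ∅ then 1 else 0 := by
  by_cases h : B = ∅
  · simp [h]
  · rw [if_neg h]
    have := Finset.sum_powerset_neg_one_pow_card_of_nonempty
      (Finset.nonempty_iff_ne_empty.mpr h)
    exact_mod_cast this

end SIHelpers

/-- Shapley interaction index of a unanimity game. -/
theorem SI_unanimity {ι : Type*} [Fintype ι] [DecidableEq ι]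
    (T S : Finset ι) (hT : T.Nonempty) (hS : S.Nonempty) :
    SIderiv (unanimity T) S =
      if S ⊆ T then (1 : ℝ) / ((T.card - S.card + 1 : ℕ) : ℝ) else 0 := by
  classical
  set n := Fintype.card ι with hn
  -- Step 1: compute the inner alternating sum
  have hinner : ∀ T' ∈ (Finset.univ \ S).powerset,
      (∑ L ∈ S.powerset, (-1:ℝ)^(S.card - L.card) * unanimity T (T' ∪ L))
      = if S ⊆ T ∧ T \ S ⊆ T' then 1 else 0 := by
    intro T' hT'
    rw [Finset.mem_powerset] at hT'
    have hdisj : Disjoint T' S := by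
      intro x hx1 hx2 y hy
      have h1 := hx1 hy
      have h2 := hx2 hy
      have := (Finset.mem_sdiff.mp (hT' h1)).2
      exact absurd h2 this
    have hval : ∀ L ∈ S.powerset, (-1:ℝ)^(S.card - L.card) * unanimity T (T' ∪ L)
        = (if T \ S ⊆ T' then (1:ℝ) else 0) *
          ((-1:ℝ)^(S.card - L.card) * (if T ∩ S ⊆ L then (1:ℝ) else 0)) := by
      intro L hL
      rw [Finset.mem_powerset] at hL
      have hiff : T ⊆ T' ∪ L ↔ (T \ S ⊆ T' ∧ T ∩ S ⊆ L) := by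
        constructor
        · intro h
          constructor
          · intro x hx
            obtain ⟨hxT, hxS⟩ := Finset.mem_sdiff.mp hx
            rcases Finset.mem_union.mp (h hxT) with h' | h'
            · exact h'
            · exact absurd (hL h') hxS
          · intro x hx
            obtain ⟨hxT, hxS⟩ := Finset.mem_inter.mp hx
            rcases Finset.mem_union.mp (h hxT) with h' | h'
            · exact (Finset.disjoint_left.mp hdisj h' hxS).elim
            · exact h'
        · rintro ⟨h1, h2⟩ x hx
          by_cases hxS : x ∈ S
          · exact Finset.mem_union_right _ (h2 (Finset.mem_inter.mpr ⟨hx, hxS⟩))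
          · exact Finset.mem_union_left _ (h1 (Finset.mem_sdiff.mpr ⟨hx, hxS⟩))
      unfold unanimity
      rw [if_congr hiff rfl rfl]
      by_cases h1 : T \ S ⊆ T' <;> by_cases h2 : T ∩ S ⊆ L <;> simp [h1, h2]
    rw [Finset.sum_congr rfl hval, ← Finset.mul_sum]
    have hsum : (∑ L ∈ S.powerset,
        (-1:ℝ)^(S.card - L.card) * (if T ∩ S ⊆ L then (1:ℝ) else 0))
        = if S ⊆ T then 1 else 0 := by
      set A := T ∩ S with hA
      have hAS : A ⊆ S := Finset.inter_subset_right
      have hstep : (∑ L ∈ S.powerset,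
          (-1:ℝ)^(S.card - L.card) * (if A ⊆ L then (1:ℝ) else 0))
          = ∑ L ∈ S.powerset.filter (fun L => A ⊆ L), (-1:ℝ)^(S.card - L.card) := by
        rw [Finset.sum_filter]
        refine Finset.sum_congr rfl fun L _ => ?_
        by_cases h : A ⊆ L <;> simp [h]
      rw [hstep]
      have hbij : (∑ L ∈ S.powerset.filter (fun L => A ⊆ L), (-1:ℝ)^(S.card - L.card))
          = ∑ M ∈ (S \ A).powerset, (-1:ℝ)^(S.card - (M.card + A.card)) := by
        refine Finset.sum_nbij' (fun L => L \ A) (fun M => M ∪ A) ?_ ?_ ?_ ?_ ?_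
        · intro L hL
          rw [Finset.mem_filter, Finset.mem_powerset] at hL
          rw [Finset.mem_powerset]
          exact Finset.sdiff_subset_sdiff hL.1 (le_refl _)
        · intro M hM
          rw [Finset.mem_powerset] at hM
          rw [Finset.mem_filter, Finset.mem_powerset]
          exact ⟨Finset.union_subset (hM.trans Finset.sdiff_subset) hAS,
            Finset.subset_union_right⟩
        · intro L hL
          rw [Finset.mem_filter] at hL
          exact Finset.sdiff_union_of_subset hL.2
        · intro M hM
          rw [Finset.mem_powerset] at hM
          have : Disjoint M A := Finset.disjoint_of_subset_left hM Finset.sdiff_disjoint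
          exact Finset.union_sdiff_cancel_right this
        · intro L hL
          rw [Finset.mem_filter, Finset.mem_powerset] at hL
          congr 1
          rw [Finset.card_sdiff_of_subset hL.2, Nat.sub_add_cancel (Finset.card_le_card hL.2)]
      rw [hbij]
      have hcardA : A.card ≤ S.card := Finset.card_le_card hAS
      have hcardB : (S \ A).card = S.card - A.card := Finset.card_sdiff_of_subset hAS
      have hBeq : ∀ M ∈ (S \ A).powerset,
          (-1:ℝ)^(S.card - (M.card + A.card)) = (-1:ℝ)^((S \ A).card) * (-1:ℝ)^M.card := by
        intro M hM
        rw [Finset.mem_powerset] at hM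
        have hm : M.card ≤ (S \ A).card := Finset.card_le_card hM
        have h1 : S.card - (M.card + A.card) = (S \ A).card - M.card := by omega
        rw [h1, neg_one_pow_sub_real _ _ hm]
      rw [Finset.sum_congr rfl hBeq, ← Finset.mul_sum, sum_powerset_neg_one_real]
      by_cases hST : S ⊆ T
      · have : S \ A = ∅ := by
          rw [hA, Finset.sdiff_eq_empty_iff_subset]
          intro x hx
          exact Finset.mem_inter.mpr ⟨hST hx, hx⟩
        simp [this, hST]
      · have : S \ A ≠ ∅ := by
          intro h
          apply hST
          intro x hx
          by_contra hxT
          have : x ∈ S \ A := Finset.mem_sdiff.mpr ⟨hx, fun hc => hxT (Finset.mem_inter.mp hc).1⟩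
          simp [h] at this
        simp [this, hST]
    rw [hsum]
    by_cases h1 : S ⊆ T <;> by_cases h2 : T \ S ⊆ T' <;> simp [h1, h2]
  -- rewrite SIderiv using hinner
  unfold SIderiv
  rw [Finset.sum_congr rfl (fun T' hT' => by rw [hinner T' hT'])]
  by_cases hST : S ⊆ T
  · rw [if_pos hST]
    have hsT : S.card ≤ T.card := Finset.card_le_card hST
    set a := T.card - S.card with ha
    set d := n - T.card with hd
    have htn : T.card ≤ n := by
      rw [hn]; exact (Finset.card_le_card (Finset.subset_univ T)).trans_eq Finset.card_univ
    -- reduce to sum over supersets of T \ S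
    have hstep2 : (∑ T' ∈ (Finset.univ \ S).powerset,
        ((((n - T'.card - S.card).factorial * T'.card.factorial : ℕ) : ℝ) /
          (((n - S.card + 1).factorial : ℕ) : ℝ)) *
          (if S ⊆ T ∧ T \ S ⊆ T' then (1:ℝ) else 0))
        = ∑ T' ∈ (Finset.univ \ S).powerset.filter (fun T' => T \ S ⊆ T'),
          ((((n - T'.card - S.card).factorial * T'.card.factorial : ℕ) : ℝ) /
          (((n - S.card + 1).factorial : ℕ) : ℝ)) := by
      rw [Finset.sum_filter]
      refine Finset.sum_congr rfl fun T' _ => ?_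
      by_cases h : T \ S ⊆ T' <;> simp [h, hST]
    rw [hstep2]
    -- bijection with powerset of univ \ T
    have hbij2 : (∑ T' ∈ (Finset.univ \ S).powerset.filter (fun T' => T \ S ⊆ T'),
          ((((n - T'.card - S.card).factorial * T'.card.factorial : ℕ) : ℝ) /
          (((n - S.card + 1).factorial : ℕ) : ℝ)))
        = ∑ M ∈ (Finset.univ \ T).powerset,
          ((((n - (M.card + a) - S.card).factorial * (M.card + a).factorial : ℕ) : ℝ) /
          (((n - S.card + 1).factorial : ℕ) : ℝ)) := by
      refine Finset.sum_nbij' (fun T' => T' \ T) (fun M => M ∪ (T \ S)) ?_ ?_ ?_ ?_ ?_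
      · intro T' _
        rw [Finset.mem_powerset]
        exact Finset.sdiff_subset_sdiff (Finset.subset_univ _) (le_refl _)
      · intro M hM
        rw [Finset.mem_powerset] at hM
        rw [Finset.mem_filter, Finset.mem_powerset]
        constructor
        · apply Finset.union_subset
          · exact hM.trans (Finset.sdiff_subset_sdiff (le_refl _) hST)
          · exact Finset.sdiff_subset_sdiff (Finset.subset_univ _) (le_refl _)
        · exact Finset.subset_union_right
      · intro T' hT'
        rw [Finset.mem_filter, Finset.mem_powerset] at hT'
        ext x
        simp only [Finset.mem_union, Finset.mem_sdiff]
        constructor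
        · rintro (⟨h1, _⟩ | ⟨h1, h2⟩)
          · exact h1
          · exact hT'.2 (Finset.mem_sdiff.mpr ⟨h1, h2⟩)
        · intro hx
          by_cases hxT : x ∈ T
          · right
            exact ⟨hxT, fun hxS => (Finset.mem_sdiff.mp (hT'.1 hx)).2 hxS⟩
          · left
            exact ⟨hx, hxT⟩
      · intro M hM
        rw [Finset.mem_powerset] at hM
        ext x
        simp only [Finset.mem_sdiff, Finset.mem_union]
        constructor
        · rintro ⟨h1 | h1, h2⟩
          · exact h1
          · exact absurd h1.1 h2
        · intro hx
          exact ⟨Or.inl hx, (Finset.mem_sdiff.mp (hM hx)).2⟩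
      · intro T' hT'
        rw [Finset.mem_filter, Finset.mem_powerset] at hT'
        have hTT : T' ∩ T = T \ S := by
          ext x
          simp only [Finset.mem_inter, Finset.mem_sdiff]
          constructor
          · rintro ⟨h1, h2⟩
            exact ⟨h2, (Finset.mem_sdiff.mp (hT'.1 h1)).2⟩
          · intro hx
            exact ⟨hT'.2 (Finset.mem_sdiff.mpr hx), hx.1⟩
        have h1 := Finset.card_sdiff_add_card_inter T' T
        rw [hTT, Finset.card_sdiff_of_subset hST] at h1
        have hcard : T'.card = (T' \ T).card + a := by omega
        rw [← hcard]
    rw [hbij2]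
    have hcardD : (Finset.univ \ T).card = d := by
      rw [Finset.card_sdiff_of_subset (Finset.subset_univ T), Finset.card_univ]
    rw [Finset.sum_powerset]
    rw [hcardD]
    have hterm : ∀ j ∈ Finset.range (d+1),
        (∑ M ∈ Finset.powersetCard j (Finset.univ \ T),
          ((((n - (M.card + a) - S.card).factorial * (M.card + a).factorial : ℕ) : ℝ) /
          (((n - S.card + 1).factorial : ℕ) : ℝ)))
        = ((d.choose j : ℝ) * (((a+j).factorial : ℝ) * ((d-j).factorial : ℝ)))
            / (((a+d+1).factorial : ℕ) : ℝ) := by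
      intro j hj
      have hj' : j ≤ d := Nat.lt_succ_iff.mp (Finset.mem_range.mp hj)
      have heq : ∀ M ∈ Finset.powersetCard j (Finset.univ \ T),
          ((((n - (M.card + a) - S.card).factorial * (M.card + a).factorial : ℕ) : ℝ) /
          (((n - S.card + 1).factorial : ℕ) : ℝ))
          = (((a+j).factorial : ℝ) * ((d-j).factorial : ℝ)) / (((a+d+1).factorial : ℕ) : ℝ) := by
        intro M hM
        have hMc : M.card = j := (Finset.mem_powersetCard.mp hM).2
        have e1 : n - (M.card + a) - S.card = d - j := by
          rw [hMc]; omega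
        have e2 : M.card + a = a + j := by rw [hMc]; omega
        have e3 : n - S.card + 1 = a + d + 1 := by omega
        rw [e1, e2, e3]
        push_cast
        ring
      rw [Finset.sum_congr rfl heq, Finset.sum_const, Finset.card_powersetCard, hcardD,
        nsmul_eq_mul]
      ring
    rw [Finset.sum_congr rfl hterm, SI_key_real a d]
    have : ((T.card - S.card + 1 : ℕ) : ℝ) = (a : ℝ) + 1 := by push_cast; ring
    rw [this]
  · rw [if_neg hST]
    refine Finset.sum_eq_zero fun T' _ => ?_
    rw [if_neg (by tauto), mul_zero]
end
end

section
/- For any TU game v on N and nonempty S ⊆ N, the Shapley interaction index can be expressed in terms of Harsanyi dividends as SI^v(S) = Σ_{T ⊇ S} Δ_v(T)/(|T|-|S|+1). -/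
open Finset

noncomputable section
open scoped Classical

open TUGame

section Aux
open Finset
variable {ι : Type*} [Fintype ι] [DecidableEq ι]

private lemma SI_key (M a : ℕ) :
    ∑ k ∈ Finset.range (M+1), (M.choose k : ℝ) * (-1)^k / (a+k+1) =
      (a.factorial * M.factorial : ℕ) / ((a+M+1).factorial : ℕ) := by
  induction M generalizing a with
  | zero =>
    have : (a.factorial : ℝ) ≠ 0 := by positivity
    simp [Nat.factorial_succ]
    field_simp
  | succ M ih =>
    have step : ∑ k ∈ Finset.range (M+2), ((M+1).choose k : ℝ) * (-1)^k / (a+k+1)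
        = (∑ k ∈ Finset.range (M+1), (M.choose k : ℝ) * (-1)^k / (a+k+1))
          - ∑ k ∈ Finset.range (M+1), (M.choose k : ℝ) * (-1)^k / ((a:ℝ)+1+k+1) := by
      rw [Finset.sum_range_succ' (fun k => ((M+1).choose k : ℝ) * (-1)^k / (a+k+1)) (M+1)]
      push_cast
      have hsplit : ∀ k ∈ Finset.range (M+1),
          ((M+1).choose (k+1) : ℝ) * (-1)^(k+1) / ((a:ℝ)+(k+1)+1)
          = (M.choose k : ℝ) * (-1)^(k+1) / ((a:ℝ)+(k+1)+1)
            + (M.choose (k+1) : ℝ) * (-1)^(k+1) / ((a:ℝ)+(k+1)+1) := by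
        intro k _
        rw [Nat.choose_succ_succ']
        push_cast; ring
      rw [Finset.sum_congr rfl hsplit, Finset.sum_add_distrib]
      have eA : ∑ k ∈ Finset.range (M+1), (M.choose k : ℝ) * (-1)^(k+1) / ((a:ℝ)+(k+1)+1)
          = - ∑ k ∈ Finset.range (M+1), (M.choose k : ℝ) * (-1)^k / ((a:ℝ)+1+k+1) := by
        rw [← Finset.sum_neg_distrib]
        apply Finset.sum_congr rfl
        intro k _; push_cast; ring
      have eB : (((M+1).choose 0 : ℝ) * (-1)^0 / ((a:ℝ)+0+1))
          + ∑ k ∈ Finset.range (M+1), (M.choose (k+1) : ℝ) * (-1)^(k+1) / ((a:ℝ)+(k+1)+1)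
          = ∑ k ∈ Finset.range (M+1), (M.choose k : ℝ) * (-1)^k / ((a:ℝ)+k+1) := by
        rw [Finset.sum_range_succ (fun k => (M.choose (k+1) : ℝ) * (-1)^(k+1) / ((a:ℝ)+(k+1)+1)) M]
        rw [Finset.sum_range_succ' (fun k => ((M).choose k : ℝ) * (-1)^k / ((a:ℝ)+k+1)) M]
        simp only [Nat.choose_succ_self, Nat.cast_zero, zero_mul, zero_div, add_zero,
          Nat.choose_zero_right, Nat.cast_one]
        push_cast
        ring_nf
      linarith [eA, eB]
    have ih' := ih (a+1)
    push_cast at ih'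
    rw [step, ih a, ih']
    have h2 : ((a+M+1).factorial : ℝ) ≠ 0 := by positivity
    rw [show (a+(M+1)+1) = (a+M+1)+1 from by ring, show (a+1+M+1) = (a+M+1)+1 from by ring]
    rw [Nat.factorial_succ (a+M+1), Nat.factorial_succ a, Nat.factorial_succ M]
    push_cast
    field_simp
    ring

private noncomputable def SIcoeff (S Q : Finset ι) : ℝ :=
  (((Fintype.card ι - (Q \ S).card - S.card).factorial * (Q \ S).card.factorial : ℕ) : ℝ) /
    (((Fintype.card ι - S.card + 1).factorial : ℕ) : ℝ) * (-1) ^ (S.card - (Q ∩ S).card)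

private lemma SIderiv_eq_coeff (v : Finset ι → ℝ) (S : Finset ι) :
    SIderiv v S = ∑ Q ∈ Finset.univ.powerset, SIcoeff S Q * v Q := by
  unfold SIderiv
  simp_rw [Finset.mul_sum]
  rw [← Finset.sum_product']
  refine Finset.sum_nbij' (fun p => p.1 ∪ p.2) (fun Q => (Q \ S, Q ∩ S)) ?_ ?_ ?_ ?_ ?_
  · intro p _; exact Finset.mem_powerset.2 (Finset.subset_univ _)
  · intro Q _
    rw [Finset.mem_product]
    constructor
    · exact Finset.mem_powerset.2 (fun x hx => by
        simp only [Finset.mem_sdiff, Finset.mem_univ, true_and] at hx ⊢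
        exact hx.2)
    · exact Finset.mem_powerset.2 (Finset.inter_subset_right)
  · rintro ⟨T, L⟩ hp
    rw [Finset.mem_product, Finset.mem_powerset, Finset.mem_powerset] at hp
    obtain ⟨hT, hL⟩ := hp
    have hTS : Disjoint T S := by
      rw [Finset.disjoint_left]; intro x hx
      have := hT hx; simp at this; exact this
    have h1 : (T ∪ L) \ S = T := by
      rw [Finset.union_sdiff_distrib, Finset.sdiff_eq_self_of_disjoint hTS,
        Finset.sdiff_eq_empty_iff_subset.2 hL, Finset.union_empty]
    have h2 : (T ∪ L) ∩ S = L := by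
      rw [Finset.union_inter_distrib_right, Finset.disjoint_iff_inter_eq_empty.1 hTS,
        Finset.empty_union, Finset.inter_eq_left.2 hL]
    simp [h1, h2]
  · intro Q _; exact Finset.sdiff_union_inter Q S
  · rintro ⟨T, L⟩ hp
    rw [Finset.mem_product, Finset.mem_powerset, Finset.mem_powerset] at hp
    obtain ⟨hT, hL⟩ := hp
    have hTS : Disjoint T S := by
      rw [Finset.disjoint_left]; intro x hx
      have := hT hx; simp at this; exact this
    have h1 : (T ∪ L) \ S = T := by
      rw [Finset.union_sdiff_distrib, Finset.sdiff_eq_self_of_disjoint hTS,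
        Finset.sdiff_eq_empty_iff_subset.2 hL, Finset.union_empty]
    have h2 : (T ∪ L) ∩ S = L := by
      rw [Finset.union_inter_distrib_right, Finset.disjoint_iff_inter_eq_empty.1 hTS,
        Finset.empty_union, Finset.inter_eq_left.2 hL]
    simp only [SIcoeff, h1, h2]
    ring

private lemma SIdiv_eq_coeff (v : Finset ι → ℝ) (S : Finset ι) :
    SIdiv v S = ∑ Q ∈ Finset.univ.powerset, SIcoeff S Q * v Q := by
  unfold SIdiv dividend
  simp_rw [Finset.sum_div]
  rw [Finset.sum_comm' (s := Finset.univ.powerset.filter (fun T => S ⊆ T))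
      (t := fun T => T.powerset)
      (t' := Finset.univ.powerset)
      (s' := fun R => Finset.univ.powerset.filter (fun T => S ∪ R ⊆ T))
      (by
        intro T R
        simp only [Finset.mem_filter, Finset.mem_powerset, Finset.union_subset_iff]
        constructor
        · rintro ⟨⟨h1, h2⟩, h3⟩; exact ⟨⟨h1, h2, h3⟩, h3.trans h1⟩
        · rintro ⟨⟨h1, h2, h3⟩, _⟩; exact ⟨⟨h1, h2⟩, h3⟩)]
  apply Finset.sum_congr rfl
  intro Q hQ
  set A := S ∪ Q with hA
  set n := Fintype.card ι
  set s := S.card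
  set q := Q.card
  set a := (Q \ S).card with ha
  set m := A.card with hm
  set M := (Finset.univ \ A).card with hMdef
  have hmn : m ≤ n := Finset.card_le_univ A
  have hM : M = n - m := by rw [hMdef, Finset.card_sdiff_of_subset (Finset.subset_univ _), Finset.card_univ]
  have hmsa : m = s + a := by
    rw [hm, hA, ← Finset.union_sdiff_self_eq_union,
      Finset.card_union_of_disjoint Finset.disjoint_sdiff]
  have hq : (Q ∩ S).card + a = q := by
    rw [ha]; exact Finset.card_inter_add_card_sdiff Q S
  have hqs : (Q ∩ S).card ≤ s := Finset.card_le_card Finset.inter_subset_right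
  have step1 : ∑ T ∈ Finset.univ.powerset.filter (fun T => A ⊆ T),
        (-1 : ℝ)^(T.card - q) * v Q / ((T.card - s + 1 : ℕ) : ℝ)
      = ∑ K ∈ (Finset.univ \ A).powerset,
        (-1 : ℝ)^(m + K.card - q) * v Q / ((m + K.card - s + 1 : ℕ) : ℝ) := by
    refine Finset.sum_nbij' (fun T => T \ A) (fun K => A ∪ K) ?_ ?_ ?_ ?_ ?_
    · intro T hT
      simp only [Finset.mem_filter, Finset.mem_powerset] at hT ⊢
      exact Finset.sdiff_subset_sdiff hT.1 le_rfl
    · intro K hK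
      simp only [Finset.mem_powerset] at hK
      simp only [Finset.mem_filter, Finset.mem_powerset]
      exact ⟨Finset.subset_univ _, Finset.subset_union_left⟩
    · intro T hT
      simp only [Finset.mem_filter, Finset.mem_powerset] at hT
      exact Finset.union_sdiff_of_subset hT.2
    · intro K hK
      simp only [Finset.mem_powerset] at hK
      apply Finset.union_sdiff_cancel_left
      exact Finset.disjoint_left.2 fun x hx hx' => ((Finset.mem_sdiff.1 (hK hx')).2 hx).elim
    · intro T hT
      simp only [Finset.mem_filter, Finset.mem_powerset] at hT
      have h1 : (T \ A).card = T.card - m := Finset.card_sdiff_of_subset hT.2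
      have h2 : m ≤ T.card := Finset.card_le_card hT.2
      rw [h1]
      have : m + (T.card - m) = T.card := by omega
      rw [this]
  rw [step1]
  rw [Finset.sum_powerset (Finset.univ \ A)
    (fun K => (-1 : ℝ)^(m + K.card - q) * v Q / ((m + K.card - s + 1 : ℕ) : ℝ))]
  have step2 : ∀ j ∈ Finset.range (M + 1),
      (∑ K ∈ Finset.powersetCard j (Finset.univ \ A),
        (-1 : ℝ)^(m + K.card - q) * v Q / ((m + K.card - s + 1 : ℕ) : ℝ))
      = ((-1 : ℝ)^(s - (Q ∩ S).card) * v Q) *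
          ((M.choose j : ℝ) * (-1)^j / ((a : ℝ) + j + 1)) := by
    intro j _
    rw [Finset.sum_powersetCard j (Finset.univ \ A)
      (fun k => (-1 : ℝ)^(m + k - q) * v Q / ((m + k - s + 1 : ℕ) : ℝ))]
    rw [← hMdef]
    have e1 : m + j - q = (s - (Q ∩ S).card) + j := by omega
    have e2 : (m + j - s + 1 : ℕ) = a + j + 1 := by omega
    rw [e1, e2, pow_add]
    push_cast
    rw [nsmul_eq_mul]
    ring
  rw [Finset.sum_congr rfl step2, ← Finset.mul_sum, SI_key M a]
  have e3 : n - a - s = M := by omega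
  have e4 : n - s + 1 = a + M + 1 := by omega
  rw [SIcoeff]
  rw [← ha]
  rw [show Fintype.card ι = n from rfl, show S.card = s from rfl, e3, e4]
  push_cast
  ring

end Aux

/-- the Shapley interaction index in terms of Harsanyi dividends. -/
theorem SI_eq_dividend_form {ι : Type*} [Fintype ι] [DecidableEq ι]
    (v : Finset ι → ℝ) (S : Finset ι) (hS : S.Nonempty) :
    SIderiv v S = SIdiv v S := by
  rw [SIderiv_eq_coeff, SIdiv_eq_coeff]
end
end

section
/- For a communication situation (N, v, Γ) and a coalition S ⊆ N that is not contained in any single connected component of the graph Γ, the Harsanyi dividend of S in the graph-restricted game vanishes: Δ_{v^Γ}(S) = 0. -/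
open Finset

noncomputable section
open scoped Classical

open TUGame

section Aux
open TUGame
variable {ι : Type*} [Fintype ι] [DecidableEq ι]

lemma restrict_univ (G : SimpleGraph ι) : restrict G Finset.univ = G := by
  ext i j; simp [TUGame.restrict]

lemma mem_component {G : SimpleGraph ι} {i j : ι} :
    j ∈ component G i ↔ G.Reachable i j := by
  simp [component, comp, restrict_univ]

lemma comp_eq_of_closed (G : SimpleGraph ι) (R R' : Finset ι) (hsub : R' ⊆ R)
    (hcl : ∀ j ∈ R', ∀ k, (restrict G R).Adj j k → k ∈ R') {j : ι} (hj : j ∈ R') :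
    comp G R j = comp G R' j := by
  have key : ∀ {a b : ι}, (restrict G R).Walk a b → a ∈ R' →
      b ∈ R' ∧ (restrict G R').Reachable a b := by
    intro a b w
    induction w with
    | nil => intro ha; exact ⟨ha, SimpleGraph.Reachable.refl _⟩
    | @cons x y z h p ih =>
      intro ha
      have hy : y ∈ R' := hcl _ ha _ h
      obtain ⟨hc, hr⟩ := ih hy
      have hxy : (restrict G R').Adj x y := ⟨h.1, ha, hy⟩
      exact ⟨hc, hxy.reachable.trans hr⟩
  ext k
  simp only [comp, Finset.mem_filter]
  constructor
  · rintro ⟨hkR, hr⟩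
    obtain ⟨w⟩ := hr
    exact key w hj
  · rintro ⟨hkR', hr⟩
    have hle : restrict G R' ≤ restrict G R := by
      intro a b hab
      exact ⟨hab.1, hsub hab.2.1, hsub hab.2.2⟩
    exact ⟨hsub hkR', hr.mono hle⟩

lemma comp_subset_component {G : SimpleGraph ι} {R : Finset ι} {i j k : ι}
    (hj : j ∈ component G i) (hk : k ∈ comp G R j) : k ∈ component G i := by
  simp only [comp, Finset.mem_filter] at hk
  rw [mem_component] at hj ⊢
  have hle : restrict G R ≤ G := by intro a b hab; exact hab.1
  exact hj.trans (hk.2.mono hle)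

lemma self_mem_comp {G : SimpleGraph ι} {R : Finset ι} {j : ι} (hj : j ∈ R) :
    j ∈ comp G R j := by
  simp only [comp, Finset.mem_filter]
  exact ⟨hj, SimpleGraph.Reachable.refl j⟩

lemma restrictedGame_split (G : SimpleGraph ι) (v : Finset ι → ℝ) (R : Finset ι) (i : ι) :
    restrictedGame G v R
      = restrictedGame G v (R ∩ component G i) + restrictedGame G v (R \ component G i) := by
  set C0 := component G i with hC0
  have hcomp_cl : ∀ j ∈ C0, ∀ k, G.Adj j k → k ∈ C0 := by
    intro j hj k hadj
    rw [mem_component] at hj ⊢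
    exact hj.trans hadj.reachable
  -- comp on the two pieces agrees with comp on R
  have h1 : ∀ j ∈ R ∩ C0, comp G R j = comp G (R ∩ C0) j := by
    intro j hj
    refine comp_eq_of_closed G R (R ∩ C0) (Finset.inter_subset_left) ?_ hj
    intro a ha k hak
    rw [Finset.mem_inter] at ha ⊢
    exact ⟨hak.2.2, hcomp_cl a ha.2 k hak.1⟩
  have h2 : ∀ j ∈ R \ C0, comp G R j = comp G (R \ C0) j := by
    intro j hj
    refine comp_eq_of_closed G R (R \ C0) (Finset.sdiff_subset) ?_ hj
    intro a ha k hak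
    rw [Finset.mem_sdiff] at ha ⊢
    refine ⟨hak.2.2, fun hkC => ha.2 (hcomp_cl k hkC a hak.1.symm)⟩
  have himgR : R.image (comp G R)
      = (R ∩ C0).image (comp G (R ∩ C0)) ∪ (R \ C0).image (comp G (R \ C0)) := by
    have hRu : (R ∩ C0) ∪ (R \ C0) = R := by
      ext x; simp only [Finset.mem_union, Finset.mem_inter, Finset.mem_sdiff]; tauto
    have e1 : (R ∩ C0).image (comp G R) = (R ∩ C0).image (comp G (R ∩ C0)) :=
      Finset.image_congr (fun j hj => h1 j hj)
    have e2 : (R \ C0).image (comp G R) = (R \ C0).image (comp G (R \ C0)) :=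
      Finset.image_congr (fun j hj => h2 j hj)
    rw [← e1, ← e2, ← Finset.image_union, hRu]
  have hdisj : Disjoint ((R ∩ C0).image (comp G (R ∩ C0)))
      ((R \ C0).image (comp G (R \ C0))) := by
    rw [Finset.disjoint_left]
    intro C hC1 hC2
    obtain ⟨j, hj, rfl⟩ := Finset.mem_image.mp hC1
    obtain ⟨k, hk, hEq⟩ := Finset.mem_image.mp hC2
    have hjC0 : j ∈ C0 := (Finset.mem_inter.mp hj).2
    have hkmem : k ∈ comp G (R ∩ C0) j := by
      rw [← hEq]; exact self_mem_comp hk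
    have : k ∈ R ∩ C0 := (Finset.mem_filter.mp hkmem).1
    exact (Finset.mem_sdiff.mp hk).2 (Finset.mem_inter.mp this).2
  rw [restrictedGame, himgR, Finset.sum_union hdisj]
  rfl

lemma alt_sum_zero {B : Finset ι} (hB : B.Nonempty) :
    ∑ Q ∈ B.powerset, (-1 : ℝ) ^ (B.card - Q.card) = 0 := by
  have hstep : ∀ Q ∈ B.powerset,
      (-1 : ℝ) ^ (B.card - Q.card) = (-1 : ℝ) ^ B.card * (-1 : ℝ) ^ Q.card := by
    intro Q hQ
    have hle : Q.card ≤ B.card := Finset.card_le_card (Finset.mem_powerset.mp hQ)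
    have h2 : B.card + Q.card = (B.card - Q.card) + 2 * Q.card := by omega
    rw [← pow_add, h2, pow_add, pow_mul]
    norm_num
  rw [Finset.sum_congr rfl hstep, ← Finset.mul_sum]
  have : ∑ Q ∈ B.powerset, (-1 : ℝ) ^ Q.card
      = ((∑ Q ∈ B.powerset, (-1 : ℤ) ^ Q.card : ℤ) : ℝ) := by push_cast; rfl
  rw [this, Finset.sum_powerset_neg_one_pow_card_of_nonempty hB]
  simp

end Aux

/-- the Harsanyi dividend of a coalition not contained in a single
connected component of the graph vanishes in the graph-restricted game. -/
theorem dividend_restrictedGame_of_disconnected {ι : Type*} [Fintype ι] [DecidableEq ι]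
    (G : SimpleGraph ι) (v : Finset ι → ℝ) (S : Finset ι)
    (h : ¬ ∃ i : ι, S ⊆ component G i) :
    dividend (restrictedGame G v) S = 0 := by
  classical
  by_cases hSe : S = ∅
  · subst hSe
    have hι : IsEmpty ι := by
      by_contra hne
      rw [not_isEmpty_iff] at hne
      exact h ⟨hne.some, Finset.empty_subset _⟩
    simp [dividend, restrictedGame]
  obtain ⟨i, hiS⟩ := Finset.nonempty_iff_ne_empty.mpr hSe
  set C0 := component G i with hC0def
  set A := S ∩ C0 with hAdef
  set B := S \ C0 with hBdef
  have hABdisj : Disjoint A B := by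
    rw [Finset.disjoint_left]
    intro x hx hx'
    exact (Finset.mem_sdiff.mp hx').2 (Finset.mem_inter.mp hx).2
  have hAB : A ∪ B = S := by
    ext x; simp only [hAdef, hBdef, Finset.mem_union, Finset.mem_inter, Finset.mem_sdiff]; tauto
  have hAne : A.Nonempty := ⟨i, Finset.mem_inter.mpr ⟨hiS, mem_component.mpr (SimpleGraph.Reachable.refl _)⟩⟩
  have hBne : B.Nonempty := by
    rw [Finset.sdiff_nonempty]
    intro hsub
    exact h ⟨i, hsub⟩
  have hcardS : S.card = A.card + B.card := by
    rw [← hAB, Finset.card_union_of_disjoint hABdisj]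
  -- rewrite the dividend as a double sum
  have hbij : ∀ f : Finset ι → ℝ,
      ∑ R ∈ S.powerset, f R = ∑ P ∈ A.powerset, ∑ Q ∈ B.powerset, f (P ∪ Q) := by
    intro f
    rw [← Finset.sum_product']
    refine Finset.sum_nbij' (fun R => (R ∩ A, R ∩ B)) (fun p => p.1 ∪ p.2) ?_ ?_ ?_ ?_ ?_
    · intro R hR
      simp only [Finset.mem_product, Finset.mem_powerset]
      exact ⟨Finset.inter_subset_right, Finset.inter_subset_right⟩
    · intro p hp
      simp only [Finset.mem_product, Finset.mem_powerset] at hp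
      rw [Finset.mem_powerset, ← hAB]
      exact Finset.union_subset_union hp.1 hp.2
    · intro R hR
      rw [Finset.mem_powerset] at hR
      simp only
      rw [← Finset.inter_union_distrib_left, hAB, Finset.inter_eq_left.mpr hR]
    · intro p hp
      simp only [Finset.mem_product, Finset.mem_powerset] at hp
      have h1 : (p.1 ∪ p.2) ∩ A = p.1 := by
        ext x
        simp only [Finset.mem_inter, Finset.mem_union]
        constructor
        · rintro ⟨hx | hx, hxA⟩
          · exact hx
          · exact absurd hxA (Finset.disjoint_right.mp hABdisj (hp.2 hx))
        · intro hx; exact ⟨Or.inl hx, hp.1 hx⟩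
      have h2 : (p.1 ∪ p.2) ∩ B = p.2 := by
        ext x
        simp only [Finset.mem_inter, Finset.mem_union]
        constructor
        · rintro ⟨hx | hx, hxB⟩
          · exact absurd hxB (Finset.disjoint_left.mp hABdisj (hp.1 hx))
          · exact hx
        · intro hx; exact ⟨Or.inr hx, hp.2 hx⟩
      exact Prod.ext h1 h2
    · intro R hR
      rw [Finset.mem_powerset] at hR
      congr 1
      rw [← Finset.inter_union_distrib_left, hAB, Finset.inter_eq_left.mpr hR]
  rw [dividend, hbij]
  have hterm : ∀ P ∈ A.powerset, ∀ Q ∈ B.powerset,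
      (-1 : ℝ) ^ (S.card - (P ∪ Q).card) * restrictedGame G v (P ∪ Q)
        = (-1 : ℝ) ^ (A.card - P.card) * ((-1 : ℝ) ^ (B.card - Q.card) *
            (restrictedGame G v P + restrictedGame G v Q)) := by
    intro P hP Q hQ
    rw [Finset.mem_powerset] at hP hQ
    have hPC0 : P ⊆ C0 := hP.trans (hAdef ▸ Finset.inter_subset_right)
    have hQC0 : ∀ x ∈ Q, x ∉ C0 := fun x hx => (Finset.mem_sdiff.mp (hQ hx)).2
    have hPQdisj : Disjoint P Q := hABdisj.mono hP hQ
    have hinter : (P ∪ Q) ∩ C0 = P := by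
      ext x
      simp only [Finset.mem_inter, Finset.mem_union]
      constructor
      · rintro ⟨hx | hx, hxC⟩
        · exact hx
        · exact absurd hxC (hQC0 x hx)
      · intro hx; exact ⟨Or.inl hx, hPC0 hx⟩
    have hsdiff : (P ∪ Q) \ C0 = Q := by
      ext x
      simp only [Finset.mem_sdiff, Finset.mem_union]
      constructor
      · rintro ⟨hx | hx, hxC⟩
        · exact absurd (hPC0 hx) hxC
        · exact hx
      · intro hx; exact ⟨Or.inr hx, hQC0 x hx⟩
    have hsplit := restrictedGame_split G v (P ∪ Q) i
    rw [← hC0def, hinter, hsdiff] at hsplit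
    rw [hsplit, Finset.card_union_of_disjoint hPQdisj]
    have hpa : P.card ≤ A.card := Finset.card_le_card hP
    have hqb : Q.card ≤ B.card := Finset.card_le_card hQ
    have hexp : S.card - (P.card + Q.card) = (A.card - P.card) + (B.card - Q.card) := by
      omega
    rw [hexp, pow_add]
    ring
  rw [Finset.sum_congr rfl (fun P hP => Finset.sum_congr rfl (fun Q hQ => hterm P hP Q hQ))]
  have hGB := alt_sum_zero hBne
  have hFA := alt_sum_zero hAne
  have hinner : ∀ P ∈ A.powerset,
      ∑ Q ∈ B.powerset, (-1 : ℝ) ^ (A.card - P.card) * ((-1 : ℝ) ^ (B.card - Q.card) *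
          (restrictedGame G v P + restrictedGame G v Q))
        = (-1 : ℝ) ^ (A.card - P.card) *
            ∑ Q ∈ B.powerset, (-1 : ℝ) ^ (B.card - Q.card) * restrictedGame G v Q := by
    intro P hP
    rw [← Finset.mul_sum]
    congr 1
    have : ∀ Q ∈ B.powerset, (-1 : ℝ) ^ (B.card - Q.card) *
        (restrictedGame G v P + restrictedGame G v Q)
        = (-1 : ℝ) ^ (B.card - Q.card) * restrictedGame G v P
          + (-1 : ℝ) ^ (B.card - Q.card) * restrictedGame G v Q := fun Q _ => by ring
    rw [Finset.sum_congr rfl this, Finset.sum_add_distrib, ← Finset.sum_mul, hGB]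
    ring
  rw [Finset.sum_congr rfl hinner, ← Finset.sum_mul, hFA, zero_mul]
end
end

section
/- For a communication situation (N, v, Γ) and a coalition S not contained in a single connected component of Γ, the Myerson interaction index vanishes: MI^{v,Γ}(S) = SI^{v^Γ}(S) = 0. -/
open Finset

noncomputable section
open scoped Classical

namespace TUGame

variable {ι : Type*} [Fintype ι] [DecidableEq ι]

lemma restrict_le {G : SimpleGraph ι} {U R : Finset ι} (h : U ⊆ R) :
    restrict G U ≤ restrict G R := fun i j hij => ⟨hij.1, h hij.2.1, h hij.2.2⟩

lemma walk_closed {G : SimpleGraph ι} {U R : Finset ι} (hUR : U ⊆ R)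
    (hcl : ∀ j ∈ U, ∀ k ∈ R, G.Adj j k → k ∈ U) {i j : ι}
    (p : (restrict G R).Walk i j) :
    i ∈ U → j ∈ U ∧ (restrict G U).Reachable i j := by
  induction p with
  | nil => exact fun hi => ⟨hi, SimpleGraph.Reachable.refl _⟩
  | cons hab p ih =>
    intro hi
    have hb := hcl _ hi _ hab.2.2 hab.1
    obtain ⟨hc, hr⟩ := ih hb
    exact ⟨hc, SimpleGraph.Reachable.trans
      (SimpleGraph.Adj.reachable ⟨hab.1, hi, hb⟩) hr⟩

lemma comp_closed_eq {G : SimpleGraph ι} {U R : Finset ι} (hUR : U ⊆ R)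
    (hcl : ∀ j ∈ U, ∀ k ∈ R, G.Adj j k → k ∈ U) {i : ι} (hi : i ∈ U) :
    comp G R i = comp G U i := by
  ext j
  simp only [comp, Finset.mem_filter]
  constructor
  · rintro ⟨hjR, hr⟩
    obtain ⟨p⟩ := hr
    exact walk_closed hUR hcl p hi
  · rintro ⟨hjU, hr⟩
    exact ⟨hUR hjU, hr.mono (restrict_le hUR)⟩

lemma mem_comp_self {G : SimpleGraph ι} {R : Finset ι} {i : ι} (hi : i ∈ R) :
    i ∈ comp G R i :=
  Finset.mem_filter.2 ⟨hi, SimpleGraph.Reachable.refl _⟩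

lemma comp_subset {G : SimpleGraph ι} {R : Finset ι} (i : ι) :
    comp G R i ⊆ R := Finset.filter_subset _ _

lemma restrictedGame_split {G : SimpleGraph ι} (v : Finset ι → ℝ) {C T : Finset ι}
    (hCT : C ⊆ T) (hcl : ∀ j ∈ C, ∀ k ∈ T, G.Adj j k → k ∈ C) {R : Finset ι} (hRT : R ⊆ T) :
    restrictedGame G v R = restrictedGame G v (R ∩ C) + restrictedGame G v (R \ C) := by
  have h1 : R ∩ C ⊆ R := Finset.inter_subset_left
  have h2 : R \ C ⊆ R := Finset.sdiff_subset
  have hcl1 : ∀ j ∈ R ∩ C, ∀ k ∈ R, G.Adj j k → k ∈ R ∩ C := by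
    intro j hj k hk hadj
    exact Finset.mem_inter.2 ⟨hk, hcl j (Finset.mem_inter.1 hj).2 k (hRT hk) hadj⟩
  have hcl2 : ∀ j ∈ R \ C, ∀ k ∈ R, G.Adj j k → k ∈ R \ C := by
    intro j hj k hk hadj
    refine Finset.mem_sdiff.2 ⟨hk, fun hkC => ?_⟩
    exact (Finset.mem_sdiff.1 hj).2 (hcl k hkC j (hRT ((Finset.mem_sdiff.1 hj).1)) hadj.symm)
  have hRun : (R ∩ C) ∪ (R \ C) = R := by ext x; simp; tauto
  have hdisj : Disjoint ((R ∩ C).image (comp G R)) ((R \ C).image (comp G R)) := by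
    rw [Finset.disjoint_left]
    rintro D hD1 hD2
    obtain ⟨a, ha, rfl⟩ := Finset.mem_image.1 hD1
    obtain ⟨b, hb, hEq⟩ := Finset.mem_image.1 hD2
    have hsub' : comp G R b ⊆ R \ C := by
      rw [comp_closed_eq h2 hcl2 hb]; exact comp_subset b
    have haD : a ∈ comp G R b := hEq ▸ mem_comp_self (h1 ha)
    exact (Finset.mem_sdiff.1 (hsub' haD)).2 (Finset.mem_inter.1 ha).2
  unfold restrictedGame
  have himg : R.image (comp G R)
      = ((R ∩ C).image (comp G R)) ∪ ((R \ C).image (comp G R)) := by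
    rw [← Finset.image_union, hRun]
  rw [himg, Finset.sum_union hdisj]
  congr 1
  · rw [Finset.image_congr (fun a ha => comp_closed_eq h1 hcl1 ha)]
  · rw [Finset.image_congr (fun a ha => comp_closed_eq h2 hcl2 ha)]

lemma alt_sum_zero {x : Finset ι} (h : x.Nonempty) :
    ∑ m ∈ x.powerset, ((-1 : ℝ)) ^ m.card = 0 := by
  exact_mod_cast Finset.sum_powerset_neg_one_pow_card_of_nonempty h

lemma neg_one_pow_sub {a b : ℕ} (h : b ≤ a) :
    ((-1 : ℝ)) ^ (a - b) = (-1) ^ a * (-1) ^ b := by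
  have h1 : ((-1 : ℝ)) ^ (a - b) * (-1) ^ b = (-1) ^ a := by
    rw [← pow_add, Nat.sub_add_cancel h]
  calc ((-1 : ℝ)) ^ (a - b) = ((-1 : ℝ)) ^ (a - b) * ((-1) ^ b * (-1) ^ b) := by
        rw [← pow_add, ← two_mul, pow_mul]; norm_num
    _ = (-1) ^ a * (-1) ^ b := by rw [← mul_assoc, h1]

lemma dividend_restricted_zero {G : SimpleGraph ι} (v : Finset ι → ℝ) {C T : Finset ι}
    (hCT : C ⊆ T) (hC : C.Nonempty) (hTC : (T \ C).Nonempty)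
    (hcl : ∀ j ∈ C, ∀ k ∈ T, G.Adj j k → k ∈ C) :
    dividend (restrictedGame G v) T = 0 := by
  set w := restrictedGame G v with hw
  have step1 : dividend w T
      = ∑ p ∈ C.powerset ×ˢ (T \ C).powerset,
          (-1 : ℝ) ^ T.card * ((-1) ^ p.1.card * (-1) ^ p.2.card) * (w p.1 + w p.2) := by
    unfold dividend
    refine Finset.sum_nbij' (fun R => (R ∩ C, R \ C)) (fun p => p.1 ∪ p.2) ?_ ?_ ?_ ?_ ?_
    · intro R hR
      rw [Finset.mem_powerset] at hR
      simp only [Finset.mem_product, Finset.mem_powerset]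
      exact ⟨Finset.inter_subset_right, fun x hx => by
        simp only [Finset.mem_sdiff] at hx ⊢; exact ⟨hR hx.1, hx.2⟩⟩
    · intro p hp
      simp only [Finset.mem_product, Finset.mem_powerset] at hp
      rw [Finset.mem_powerset]
      exact Finset.union_subset (hp.1.trans hCT) (hp.2.trans Finset.sdiff_subset)
    · intro R hR
      ext x; simp; tauto
    · intro p hp
      simp only [Finset.mem_product, Finset.mem_powerset] at hp
      have h1 : (p.1 ∪ p.2) ∩ C = p.1 := by
        ext x
        simp only [Finset.mem_inter, Finset.mem_union]
        constructor
        · rintro ⟨hx1 | hx2, hxC⟩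
          · exact hx1
          · exact absurd hxC (Finset.mem_sdiff.1 (hp.2 hx2)).2
        · exact fun hx => ⟨Or.inl hx, hp.1 hx⟩
      have h2 : (p.1 ∪ p.2) \ C = p.2 := by
        ext x
        simp only [Finset.mem_sdiff, Finset.mem_union]
        constructor
        · rintro ⟨hx1 | hx2, hxC⟩
          · exact absurd (hp.1 hx1) hxC
          · exact hx2
        · exact fun hx => ⟨Or.inr hx, (Finset.mem_sdiff.1 (hp.2 hx)).2⟩
      exact Prod.ext h1 h2
    · intro R hR
      rw [Finset.mem_powerset] at hR
      have hdisj : Disjoint (R ∩ C) (R \ C) := by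
        rw [Finset.disjoint_left]
        intro x hx1 hx2
        exact (Finset.mem_sdiff.1 hx2).2 (Finset.mem_inter.1 hx1).2
      have hcard : (R ∩ C).card + (R \ C).card = R.card := by
        rw [← Finset.card_union_of_disjoint hdisj]
        congr 1
        ext x; simp; tauto
      have hsplit := restrictedGame_split v hCT hcl hR
      rw [← hw] at hsplit
      rw [hsplit, neg_one_pow_sub (Finset.card_le_card hR), ← hcard, pow_add]
  rw [step1, Finset.sum_product]
  have hB0 : ∑ B ∈ (T \ C).powerset, ((-1 : ℝ)) ^ B.card = 0 := alt_sum_zero hTC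
  have hA0 : ∑ A ∈ C.powerset, ((-1 : ℝ)) ^ A.card = 0 := alt_sum_zero hC
  have inner : ∀ A ∈ C.powerset,
      (∑ B ∈ (T \ C).powerset,
        (-1 : ℝ) ^ T.card * ((-1) ^ A.card * (-1) ^ B.card) * (w A + w B))
      = (-1 : ℝ) ^ T.card * (-1) ^ A.card
          * (∑ B ∈ (T \ C).powerset, (-1 : ℝ) ^ B.card * w B) := by
    intro A _
    rw [Finset.mul_sum]
    have : ∀ B ∈ (T \ C).powerset,
        (-1 : ℝ) ^ T.card * ((-1) ^ A.card * (-1) ^ B.card) * (w A + w B)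
        = ((-1 : ℝ) ^ T.card * (-1) ^ A.card * w A) * (-1) ^ B.card
          + (-1 : ℝ) ^ T.card * (-1) ^ A.card * ((-1) ^ B.card * w B) := by
      intro B _; ring
    rw [Finset.sum_congr rfl this, Finset.sum_add_distrib, ← Finset.mul_sum, hB0, mul_zero,
      zero_add]
  rw [Finset.sum_congr rfl inner]
  have : ∀ A ∈ C.powerset,
      (-1 : ℝ) ^ T.card * (-1) ^ A.card
        * (∑ B ∈ (T \ C).powerset, (-1 : ℝ) ^ B.card * w B)
      = ((-1 : ℝ) ^ T.card * (∑ B ∈ (T \ C).powerset, (-1 : ℝ) ^ B.card * w B))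
          * (-1) ^ A.card := by
    intro A _; ring
  rw [Finset.sum_congr rfl this, ← Finset.mul_sum, hA0, mul_zero]


end TUGame

open TUGame

/-- the Myerson interaction index of a coalition not contained in
a single connected component of the graph vanishes. -/
theorem MI_of_disconnected {ι : Type*} [Fintype ι] [DecidableEq ι]
    (G : SimpleGraph ι) (v : Finset ι → ℝ) (S : Finset ι)
    (h : ¬ ∃ i : ι, S ⊆ component G i) :
    MI G v S = 0 := by
  rcases S.eq_empty_or_nonempty with rfl | hS
  · haveI : IsEmpty ι := ⟨fun i => h ⟨i, Finset.empty_subset _⟩⟩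
    simp [MI, SIdiv, dividend, restrictedGame, Finset.univ_eq_empty]
  · unfold MI SIdiv
    apply Finset.sum_eq_zero
    intro T hT
    rw [Finset.mem_filter] at hT
    have hST : S ⊆ T := hT.2
    obtain ⟨s, hs⟩ := hS
    have hsT : s ∈ T := hST hs
    have hCT : comp G T s ⊆ T := comp_subset s
    have hcl : ∀ j ∈ comp G T s, ∀ k ∈ T, G.Adj j k → k ∈ comp G T s := by
      intro j hj k hk hadj
      simp only [comp, Finset.mem_filter] at hj ⊢
      exact ⟨hk, hj.2.trans (SimpleGraph.Adj.reachable ⟨hadj, hj.1, hk⟩)⟩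
    have hC : (comp G T s).Nonempty := ⟨s, mem_comp_self hsT⟩
    have hTC : (T \ comp G T s).Nonempty := by
      rw [Finset.sdiff_nonempty]
      intro hsub
      apply h
      refine ⟨s, fun j hj => ?_⟩
      have hjC := hsub (hST hj)
      simp only [comp, Finset.mem_filter] at hjC
      simp only [component, comp, Finset.mem_filter]
      exact ⟨Finset.mem_univ j, hjC.2.mono (restrict_le (Finset.subset_univ T))⟩
    rw [dividend_restricted_zero v hCT hC hTC hcl, zero_div]
end
end

section
/- If Γ is a tree on N, then for any connected coalition S the dividends of the graph-restricted game satisfy Δ_{v^Γ}(S) = Σ_{L ⊆ C(S)} Δ_v(S∖L), where C(S) is the set of cutnodes of S, i.e., nodes of S whose removal disconnects the induced subgraph on S. -/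
open Finset

noncomputable section
open scoped Classical

open TUGame

section AuxLemmas
variable {ι : Type*} [Fintype ι] [DecidableEq ι]

lemma restrict_le (G : SimpleGraph ι) (S : Finset ι) : restrict G S ≤ G := fun _ _ h => h.1

lemma restrict_mono (G : SimpleGraph ι) {S T : Finset ι} (h : S ⊆ T) :
    restrict G S ≤ restrict G T := fun _ _ ha => ⟨ha.1, h ha.2.1, h ha.2.2⟩

lemma walk_support_mem {G : SimpleGraph ι} {S : Finset ι} {a b : ι}
    (p : (restrict G S).Walk a b) (ha : a ∈ S) : ∀ x ∈ p.support, x ∈ S := by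
  induction p with
  | nil => intro x hx; simp at hx; subst hx; exact ha
  | cons h q ih =>
    intro x hx
    rw [SimpleGraph.Walk.support_cons] at hx
    rcases List.mem_cons.mp hx with rfl | hx
    · exact ha
    · exact ih h.2.2 x hx

lemma reachable_restrict_of_forall {G : SimpleGraph ι} {S T : Finset ι} {a b : ι}
    (p : (restrict G S).Walk a b) (h : ∀ x ∈ p.support, x ∈ T) :
    (restrict G T).Reachable a b := by
  induction p with
  | nil => exact SimpleGraph.Reachable.refl _
  | cons hadj q ih =>
    refine (SimpleGraph.Adj.reachable ?_).trans (ih ?_)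
    · exact ⟨hadj.1, h _ (by simp), h _ (by simp [SimpleGraph.Walk.support_cons])⟩
    · intro x hx; exact h x (by simp [SimpleGraph.Walk.support_cons, hx])

lemma reachable_of_mem_support {H : SimpleGraph ι} {a b x : ι}
    (p : H.Walk a b) (hx : x ∈ p.support) : H.Reachable a x := by
  induction p with
  | nil => simp at hx; subst hx; exact SimpleGraph.Reachable.refl _
  | cons h q ih =>
    rw [SimpleGraph.Walk.support_cons] at hx
    rcases List.mem_cons.mp hx with rfl | hx
    · exact SimpleGraph.Reachable.refl _
    · exact h.reachable.trans (ih hx)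

lemma two_nbrs_of_internal {H : SimpleGraph ι} {a b i : ι}
    (p : H.Walk a b) (hp : p.IsPath) (hi : i ∈ p.support) (hia : i ≠ a) (hib : i ≠ b) :
    ∃ x y, x ≠ y ∧ H.Adj i x ∧ H.Adj i y := by
  induction p with
  | nil => simp at hi; exact absurd hi hia
  | @cons u c w h q ih =>
    rw [SimpleGraph.Walk.support_cons] at hi
    rcases List.mem_cons.mp hi with rfl | hi
    · exact absurd rfl hia
    rw [SimpleGraph.Walk.cons_isPath_iff] at hp
    by_cases hic : i = c
    · subst hic
      cases q with
      | nil => exact absurd rfl hib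
      | cons h' q' =>
        refine ⟨u, _, ?_, h.symm, h'⟩
        intro he; subst he
        exact hp.2 (by simp [SimpleGraph.Walk.support_cons])
    · exact ih hp.1 hi hic hib

lemma exists_path_of_reachable {G : SimpleGraph ι} {S : Finset ι} {a b : ι}
    (h : (restrict G S).Reachable a b) (ha : a ∈ S) :
    ∃ p : G.Walk a b, p.IsPath ∧ ∀ x ∈ p.support, x ∈ S := by
  obtain ⟨w⟩ := h
  refine ⟨(w.mapLe (restrict_le G S)).toPath, ((w.mapLe (restrict_le G S)).toPath : _).2, ?_⟩
  intro x hx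
  have h1 := SimpleGraph.Walk.support_toPath_subset (w.mapLe (restrict_le G S)) hx
  rw [SimpleGraph.Walk.support_map] at h1
  simp only [List.mem_map] at h1
  obtain ⟨y, hy, rfl⟩ := h1
  exact walk_support_mem w ha y hy



-- a 2-step path
lemma isPath_two {H : SimpleGraph ι} {a b c : ι} (h1 : H.Adj a b) (h2 : H.Adj b c)
    (hac : a ≠ c) : (SimpleGraph.Walk.cons h1 (SimpleGraph.Walk.cons h2 .nil)).IsPath := by
  rw [SimpleGraph.Walk.isPath_def]
  simp [List.nodup_cons, h1.ne, hac, h2.ne]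

lemma isPath_three {H : SimpleGraph ι} {a b c d : ι} (h1 : H.Adj a b) (h2 : H.Adj b c)
    (h3 : H.Adj c d) (hac : a ≠ c) (had : a ≠ d) (hbd : b ≠ d) :
    (SimpleGraph.Walk.cons h1 (SimpleGraph.Walk.cons h2 (SimpleGraph.Walk.cons h3 .nil))).IsPath := by
  rw [SimpleGraph.Walk.isPath_def]
  simp [List.nodup_cons, h1.ne, h2.ne, h3.ne, hac, had, hbd]

/-- If removing `i` keeps `S` connected, then `i` has at most one neighbour in `S` (tree case). -/
lemma nbr_unique_of_connectedOn_erase {G : SimpleGraph ι} (hG : G.IsTree) {S : Finset ι} {i : ι}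
    (hconn : ConnectedOn G (S.erase i)) {j k : ι}
    (hj : j ∈ S) (hk : k ∈ S) (haj : G.Adj i j) (hak : G.Adj i k) : j = k := by
  by_contra hne
  have hj' : j ∈ S.erase i := Finset.mem_erase.mpr ⟨haj.ne', hj⟩
  have hk' : k ∈ S.erase i := Finset.mem_erase.mpr ⟨hak.ne', hk⟩
  obtain ⟨p2, hp2, hp2s⟩ := exists_path_of_reachable (hconn j hj' k hk') hj'
  have hip2 : i ∉ p2.support := fun h => (Finset.mem_erase.mp (hp2s i h)).1 rfl
  have hp1 : (SimpleGraph.Walk.cons haj.symm (SimpleGraph.Walk.cons hak .nil)).IsPath :=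
    isPath_two haj.symm hak hne
  have := ((SimpleGraph.isTree_iff_existsUnique_path.mp hG).2 j k).unique hp1 hp2
  apply hip2
  rw [← this]
  simp [SimpleGraph.Walk.support_cons]

/-- Removing a leaf keeps connectivity. -/
lemma connectedOn_erase_of_unique_nbr {G : SimpleGraph ι} {S : Finset ι} {i t : ι}
    (hS : ConnectedOn G S) (h : ∀ j ∈ S, G.Adj i j → j = t) :
    ConnectedOn G (S.erase i) := by
  intro j hj k hk
  have hjS : j ∈ S := Finset.mem_of_mem_erase hj
  have hkS : k ∈ S := Finset.mem_of_mem_erase hk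
  obtain ⟨w⟩ := hS j hjS k hkS
  set p : (restrict G S).Walk j k := (w.toPath : (restrict G S).Path j k).1 with hp'
  have hp : p.IsPath := (w.toPath : (restrict G S).Path j k).2
  have hsub : ∀ x ∈ p.support, x ∈ S :=
    walk_support_mem _ hjS
  have hip : i ∉ p.support := by
    intro hip
    have hij : i ≠ j := fun he => (Finset.mem_erase.mp hj).1 he.symm
    have hik : i ≠ k := fun he => (Finset.mem_erase.mp hk).1 he.symm
    obtain ⟨x, y, hxy, hx, hy⟩ := two_nbrs_of_internal p hp hip hij hik
    have := h x (hx.2.2) hx.1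
    have := h y (hy.2.2) hy.1
    exact hxy (by grind)
  exact reachable_restrict_of_forall p fun x hx =>
    Finset.mem_erase.mpr ⟨fun he => hip (he ▸ hx), hsub x hx⟩

/-- Characterization of components of the restricted graph. -/
lemma mem_image_comp {G : SimpleGraph ι} {R T : Finset ι} :
    T ∈ R.image (comp G R) ↔
      T.Nonempty ∧ ConnectedOn G T ∧ T ⊆ R ∧ ∀ t ∈ T, ∀ j ∈ R, G.Adj t j → j ∈ T := by
  constructor
  · rintro hT
    obtain ⟨i, hiR, rfl⟩ := Finset.mem_image.mp hT
    have hii : i ∈ comp G R i := Finset.mem_filter.mpr ⟨hiR, SimpleGraph.Reachable.refl _⟩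
    refine ⟨⟨i, hii⟩, ?_, Finset.filter_subset _ _, ?_⟩
    · intro j hj k hk
      have hjc := Finset.mem_filter.mp hj
      have hkc := Finset.mem_filter.mp hk
      obtain ⟨w⟩ := hjc.2.symm.trans hkc.2
      refine reachable_restrict_of_forall w fun x hx => Finset.mem_filter.mpr ?_
      exact ⟨walk_support_mem w hjc.1 x hx, hjc.2.trans (reachable_of_mem_support w hx)⟩
    · intro t ht j hjR hadj
      have htc := Finset.mem_filter.mp ht
      exact Finset.mem_filter.mpr ⟨hjR, htc.2.trans (SimpleGraph.Adj.reachable ⟨hadj, htc.1, hjR⟩)⟩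
  · rintro ⟨⟨i, hiT⟩, hconn, hTR, hcl⟩
    refine Finset.mem_image.mpr ⟨i, hTR hiT, ?_⟩
    have stays : ∀ {a b : ι} (p : (restrict G R).Walk a b), a ∈ T → b ∈ T := by
      intro a b p
      induction p with
      | nil => exact id
      | cons h q ih => intro ha; exact ih (hcl _ ha _ h.2.2 h.1)
    ext j
    simp only [comp, Finset.mem_filter]
    constructor
    · rintro ⟨hjR, ⟨w⟩⟩
      exact stays w hiT
    · intro hjT
      exact ⟨hTR hjT, (hconn i hiT j hjT).mono (restrict_mono G hTR)⟩

/-- Forward: connected & covering implies all cutnodes lie in T. -/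
lemma cutnodes_subset_of {G : SimpleGraph ι} (hG : G.IsTree) {S T : Finset ι}
    (hS : ConnectedOn G S) (hTS : T ⊆ S) (hconn : ConnectedOn G T)
    (hcov : ∀ j ∈ S, j ∉ T → ∃ t ∈ T, G.Adj t j) :
    cutnodes G S ⊆ T := by
  have huniq := (SimpleGraph.isTree_iff_existsUnique_path.mp hG).2
  intro i hi
  by_contra hiT
  obtain ⟨hiS, hnc⟩ := Finset.mem_filter.mp hi
  obtain ⟨t, htT, hti⟩ := hcov i hiS hiT
  apply hnc
  refine connectedOn_erase_of_unique_nbr (t := t) ?hSconn ?_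
  case hSconn => exact hS
  intro j hjS hij
  by_contra hjt
  have hitne : i ≠ t := fun he => hiT (he ▸ htT)
  by_cases hjT : j ∈ T
  · obtain ⟨p1, hp1, hp1s⟩ := exists_path_of_reachable (hconn t htT j hjT) htT
    have hip1 : i ∉ p1.support := fun h => hiT (hp1s i h)
    have hp2 := isPath_two hti hij (fun he => hjt he.symm)
    have := (huniq t j).unique hp2 hp1
    exact hip1 (by rw [← this]; simp [SimpleGraph.Walk.support_cons])
  · obtain ⟨t', ht'T, ht'j⟩ := hcov j hjS hjT
    by_cases htt' : t = t'
    · subst htt'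
      have hP1 : (SimpleGraph.Walk.cons hti.symm (.nil)).IsPath :=
        SimpleGraph.Walk.IsPath.cons (by simp) (by simpa using hti.ne')
      have hP2 := isPath_two hij ht'j.symm hitne
      have := (huniq i t).unique hP1 hP2
      have hjmem : j ∈ (SimpleGraph.Walk.cons hti.symm (.nil : G.Walk t t)).support := by
        rw [this]; simp [SimpleGraph.Walk.support_cons]
      simp [SimpleGraph.Walk.support_cons] at hjmem
      rcases hjmem with rfl | rfl
      · exact hij.ne rfl
      · exact hjt rfl
    · obtain ⟨p1, hp1, hp1s⟩ := exists_path_of_reachable (hconn t htT t' ht'T) htT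
      have hip1 : i ∉ p1.support := fun h => hiT (hp1s i h)
      have hP2 := isPath_three hti hij ht'j.symm
        (fun he => hjt he.symm) (fun he => htt' he) (fun he => hiT (he ▸ ht'T))
      have := (huniq t t').unique hP2 hp1
      exact hip1 (by rw [← this]; simp [SimpleGraph.Walk.support_cons])


/-- Backward: if all cutnodes lie in `T ⊆ S` (nonempty), `S` connected, tree,
then `T` is connected and every node of `S \ T` has a neighbour in `T`. -/
lemma of_cutnodes_subset {G : SimpleGraph ι} (hG : G.IsTree) {S T : Finset ι}
    (hS : ConnectedOn G S) (hTS : T ⊆ S) (hne : T.Nonempty)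
    (hcut : cutnodes G S ⊆ T) :
    ConnectedOn G T ∧ ∀ j ∈ S, j ∉ T → ∃ t ∈ T, G.Adj t j := by
  have hleaf : ∀ i ∈ S, i ∉ T → ∀ j ∈ S, ∀ k ∈ S, G.Adj i j → G.Adj i k → j = k := by
    intro i hiS hiT j hj k hk haj hak
    have hnc : ConnectedOn G (S.erase i) := by
      by_contra hnc
      exact hiT (hcut (Finset.mem_filter.mpr ⟨hiS, hnc⟩))
    exact nbr_unique_of_connectedOn_erase hG hnc hj hk haj hak
  constructor
  · intro j hj k hk
    obtain ⟨w⟩ := hS j (hTS hj) k (hTS hk)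
    set p : (restrict G S).Walk j k := (w.toPath : (restrict G S).Path j k).1 with hp'
    have hp : p.IsPath := (w.toPath : (restrict G S).Path j k).2
    have hsub : ∀ x ∈ p.support, x ∈ S := walk_support_mem _ (hTS hj)
    refine reachable_restrict_of_forall p fun x hx => ?_
    by_contra hxT
    have hxj : x ≠ j := fun he => hxT (he ▸ hj)
    have hxk : x ≠ k := fun he => hxT (he ▸ hk)
    obtain ⟨a, b, hab, haa, hbb⟩ := two_nbrs_of_internal p hp hx hxj hxk
    exact hab (hleaf x (hsub x hx) hxT a haa.2.2 b hbb.2.2 haa.1 hbb.1)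
  · intro j hjS hjT
    obtain ⟨t0, ht0⟩ := hne
    have ht0S : t0 ∈ S := hTS ht0
    have hjt0 : j ≠ t0 := fun he => hjT (he ▸ ht0)
    obtain ⟨w⟩ := hS j hjS t0 ht0S
    set p : (restrict G S).Walk j t0 := (w.toPath : (restrict G S).Path j t0).1 with hp'
    have hp : p.IsPath := (w.toPath : (restrict G S).Path j t0).2
    clear_value p
    cases p with
    | nil => exact absurd rfl hjt0
    | @cons _ x _ h q =>
      by_cases hxT : x ∈ T
      · exact ⟨x, hxT, h.1.symm⟩
      · exfalso
        have hxS : x ∈ S := h.2.2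
        have hxt0 : x ≠ t0 := fun he => hxT (he ▸ ht0)
        cases q with
        | nil => exact hxt0 rfl
        | @cons _ y _ h' q' =>
          have hyj : j = y := hleaf x hxS hxT j hjS y h'.2.2 h.1.symm h'.1
          rw [SimpleGraph.Walk.cons_isPath_iff] at hp
          apply hp.2
          rw [SimpleGraph.Walk.support_cons]
          refine List.mem_cons.mpr (Or.inr ?_)
          rw [hyj]
          exact SimpleGraph.Walk.start_mem_support q'



lemma neg_one_pow_sub (a b : ℕ) (h : b ≤ a) : (-1:ℝ)^(a-b) = (-1)^a * (-1)^b := by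
  have hb : (-1:ℝ)^b * (-1)^b = 1 := by
    rw [← pow_add, ← two_mul, pow_mul]; simp
  calc (-1:ℝ)^(a-b) = (-1)^(a-b) * ((-1)^b * (-1)^b) := by rw [hb, mul_one]
  _ = ((-1)^(a-b) * (-1)^b) * (-1)^b := by ring
  _ = (-1)^a * (-1)^b := by rw [← pow_add, Nat.sub_add_cancel h]

lemma altsum (A : Finset ι) : ∑ X ∈ A.powerset, (-1:ℝ)^X.card = if A = ∅ then 1 else 0 := by
  have h := Finset.sum_powerset_neg_one_pow_card (x := A)
  have h2 := congrArg (fun z : ℤ => (z : ℝ)) h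
  push_cast at h2
  exact h2


end AuxLemmas


/-- for a tree, the dividends of the graph-restricted game of a
connected coalition `S` are sums of dividends of `v` over subsets of cutnodes
removed from `S`. -/
theorem dividend_restrictedGame_tree {ι : Type*} [Fintype ι] [DecidableEq ι]
    (G : SimpleGraph ι) (hG : G.IsTree) (v : Finset ι → ℝ) (hv : v ∅ = 0)
    (S : Finset ι) (hS : ConnectedOn G S) :
    dividend (restrictedGame G v) S =
      ∑ L ∈ (cutnodes G S).powerset, dividend v (S \ L) := by
  classical
  have hcS : cutnodes G S ⊆ S := Finset.filter_subset _ _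
  have keyR : ∑ L ∈ (cutnodes G S).powerset, dividend v (S \ L)
      = ∑ R ∈ S.powerset, (if cutnodes G S ⊆ R then (-1:ℝ)^(S.card - R.card) * v R else 0) := by
    simp only [dividend]
    rw [Finset.sum_comm' (s := (cutnodes G S).powerset) (t := fun L => (S \ L).powerset)
      (t' := S.powerset) (s' := fun R => ((cutnodes G S) \ R).powerset)
      (f := fun L R => (-1:ℝ)^((S \ L).card - R.card) * v R) ?hcomm]
    case hcomm =>
      intro L R
      simp only [Finset.mem_powerset]
      constructor
      · rintro ⟨hL, hR⟩
        refine ⟨fun x hx => Finset.mem_sdiff.mpr ⟨hL hx, fun hxR => ?_⟩,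
          hR.trans Finset.sdiff_subset⟩
        exact (Finset.mem_sdiff.mp (hR hxR)).2 hx
      · rintro ⟨hL, hR⟩
        refine ⟨hL.trans Finset.sdiff_subset,
          fun x hx => Finset.mem_sdiff.mpr ⟨hR hx, fun hxL => ?_⟩⟩
        exact (Finset.mem_sdiff.mp (hL hxL)).2 hx
    refine Finset.sum_congr rfl fun R hR => ?_
    rw [Finset.mem_powerset] at hR
    have hterm : ∀ L ∈ ((cutnodes G S) \ R).powerset,
        (-1:ℝ)^((S \ L).card - R.card) * v R
          = ((-1:ℝ)^(S.card - R.card) * v R) * (-1:ℝ)^L.card := by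
      intro L hL
      rw [Finset.mem_powerset] at hL
      have hLSR : L ⊆ S \ R := hL.trans (Finset.sdiff_subset_sdiff hcS Finset.Subset.rfl)
      have hLS : L ⊆ S := hLSR.trans Finset.sdiff_subset
      have hLcard : L.card ≤ S.card - R.card := by
        have := Finset.card_le_card hLSR
        rwa [Finset.card_sdiff_of_subset hR] at this
      rw [Finset.card_sdiff_of_subset hLS]
      have hexp : S.card - L.card - R.card = (S.card - R.card) - L.card := by omega
      rw [hexp, neg_one_pow_sub _ _ hLcard]
      ring
    rw [Finset.sum_congr rfl hterm, ← Finset.mul_sum, altsum, mul_ite, mul_one, mul_zero,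
      if_congr Finset.sdiff_eq_empty_iff_subset rfl rfl]
  rw [keyR]
  simp only [dividend, restrictedGame]
  have himg : ∀ R ∈ S.powerset, ∑ C ∈ R.image (comp G R), v C
      = ∑ T ∈ S.powerset, (if T ∈ R.image (comp G R) then v T else 0) := by
    intro R hR
    rw [Finset.mem_powerset] at hR
    rw [Finset.sum_ite_mem, Finset.inter_eq_right.mpr]
    intro T hT
    obtain ⟨i, hi, rfl⟩ := Finset.mem_image.mp hT
    exact Finset.mem_powerset.mpr ((Finset.filter_subset _ _).trans hR)
  calc ∑ R ∈ S.powerset, (-1:ℝ)^(S.card - R.card) * ∑ C ∈ R.image (comp G R), v C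
      = ∑ R ∈ S.powerset, ∑ T ∈ S.powerset,
          (-1:ℝ)^(S.card - R.card) * (if T ∈ R.image (comp G R) then v T else 0) := by
        refine Finset.sum_congr rfl fun R hR => ?_
        rw [himg R hR, Finset.mul_sum]
  _ = ∑ T ∈ S.powerset, ∑ R ∈ S.powerset,
          (-1:ℝ)^(S.card - R.card) * (if T ∈ R.image (comp G R) then v T else 0) :=
        Finset.sum_comm
  _ = ∑ R ∈ S.powerset, (if cutnodes G S ⊆ R then (-1:ℝ)^(S.card - R.card) * v R else 0) := by
    refine Finset.sum_congr rfl fun T hT => ?_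
    rw [Finset.mem_powerset] at hT
    rcases Finset.eq_empty_or_nonempty T with rfl | hTne
    · have h0 : ∀ R ∈ S.powerset,
          (-1:ℝ)^(S.card - R.card) * (if (∅ : Finset ι) ∈ R.image (comp G R) then v ∅ else 0)
            = 0 := by
        intro R _
        rw [if_neg, mul_zero]
        intro hmem
        simpa using (mem_image_comp.mp hmem).1
      rw [Finset.sum_congr rfl h0, Finset.sum_const_zero, hv, mul_zero]
      simp
    · set B := (S \ T).filter (fun j => ∃ t ∈ T, G.Adj t j) with hB
      by_cases hTconn : ConnectedOn G T
      · have hmemiff : ∀ R, R ⊆ S → ((T ∈ R.image (comp G R)) ↔ (T ⊆ R ∧ Disjoint R B)) := by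
          intro R hRS
          rw [mem_image_comp]
          constructor
          · rintro ⟨-, -, hTR, hcl⟩
            refine ⟨hTR, Finset.disjoint_left.mpr fun x hxR hxB => ?_⟩
            rw [hB, Finset.mem_filter] at hxB
            obtain ⟨hxST, t, htT, hadj⟩ := hxB
            exact (Finset.mem_sdiff.mp hxST).2 (hcl t htT x hxR hadj)
          · rintro ⟨hTR, hdisj⟩
            refine ⟨hTne, hTconn, hTR, fun t ht j hjR hadj => ?_⟩
            by_contra hjT
            have hjB : j ∈ B := by
              rw [hB]
              exact Finset.mem_filter.mpr ⟨Finset.mem_sdiff.mpr ⟨hRS hjR, hjT⟩, t, ht, hadj⟩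
            exact (Finset.disjoint_left.mp hdisj hjR) hjB
        have step1 : ∑ R ∈ S.powerset,
            (-1:ℝ)^(S.card - R.card) * (if T ∈ R.image (comp G R) then v T else 0)
            = ∑ R ∈ S.powerset.filter (fun R => T ⊆ R ∧ Disjoint R B),
                (-1:ℝ)^(S.card - R.card) * v T := by
          rw [Finset.sum_filter]
          refine Finset.sum_congr rfl fun R hR => ?_
          rw [Finset.mem_powerset] at hR
          rw [mul_ite, mul_zero, if_congr (hmemiff R hR) rfl rfl]
        set F := S \ (T ∪ B) with hF
        have hFST : F ⊆ S \ T := by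
          rw [hF]
          exact Finset.sdiff_subset_sdiff Finset.Subset.rfl Finset.subset_union_left
        have himage : S.powerset.filter (fun R => T ⊆ R ∧ Disjoint R B)
            = F.powerset.image (fun X => T ∪ X) := by
          ext R
          simp only [Finset.mem_filter, Finset.mem_powerset, Finset.mem_image,
            Finset.mem_powerset]
          constructor
          · rintro ⟨hRS, hTR, hdisj⟩
            refine ⟨R \ T, fun x hx => ?_, Finset.union_sdiff_of_subset hTR⟩
            obtain ⟨hxR, hxT⟩ := Finset.mem_sdiff.mp hx
            rw [hF]
            refine Finset.mem_sdiff.mpr ⟨hRS hxR, fun hxTB => ?_⟩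
            rcases Finset.mem_union.mp hxTB with h | h
            · exact hxT h
            · exact (Finset.disjoint_left.mp hdisj hxR) h
          · rintro ⟨X, hXF, rfl⟩
            refine ⟨Finset.union_subset hT (hXF.trans (hFST.trans Finset.sdiff_subset)),
              Finset.subset_union_left, ?_⟩
            rw [Finset.disjoint_union_left]
            constructor
            · exact Finset.disjoint_left.mpr fun x hxT hxB =>
                (Finset.mem_sdiff.mp ((Finset.filter_subset _ _) hxB)).2 hxT
            · exact Finset.disjoint_left.mpr fun x hxX hxB =>
                (Finset.mem_sdiff.mp (hXF hxX)).2 (Finset.mem_union_right _ hxB)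
        have hinj : ∀ X ∈ F.powerset, ∀ Y ∈ F.powerset,
            (fun X => T ∪ X) X = (fun X => T ∪ X) Y → X = Y := by
          intro X hX Y hY h
          rw [Finset.mem_powerset] at hX hY
          have hdX : Disjoint T X := Finset.disjoint_left.mpr fun x hxT hxX =>
            (Finset.mem_sdiff.mp (hFST (hX hxX))).2 hxT
          have hdY : Disjoint T Y := Finset.disjoint_left.mpr fun x hxT hxY =>
            (Finset.mem_sdiff.mp (hFST (hY hxY))).2 hxT
          rw [← Finset.union_sdiff_cancel_left hdX, ← Finset.union_sdiff_cancel_left hdY]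
          exact congrArg (· \ T) h
        rw [step1, himage, Finset.sum_image hinj]
        have step2 : ∀ X ∈ F.powerset, (-1:ℝ)^(S.card - (T ∪ X).card) * v T
            = ((-1:ℝ)^(S.card - T.card) * v T) * (-1:ℝ)^X.card := by
          intro X hX
          rw [Finset.mem_powerset] at hX
          have hdX : Disjoint T X := Finset.disjoint_left.mpr fun x hxT hxX =>
            (Finset.mem_sdiff.mp (hFST (hX hxX))).2 hxT
          have hXcard : X.card ≤ S.card - T.card := by
            have := Finset.card_le_card (hX.trans hFST)
            rwa [Finset.card_sdiff_of_subset hT] at this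
          rw [Finset.card_union_of_disjoint hdX]
          have hexp : S.card - (T.card + X.card) = (S.card - T.card) - X.card := by omega
          rw [hexp, neg_one_pow_sub _ _ hXcard]
          ring
        rw [Finset.sum_congr rfl step2, ← Finset.mul_sum, altsum]
        have hFiff : F = ∅ ↔ cutnodes G S ⊆ T := by
          constructor
          · intro hF0
            refine cutnodes_subset_of hG hS hT hTconn fun j hjS hjT => ?_
            have hjTB : j ∈ T ∪ B := by
              by_contra hj
              have : j ∈ F := by rw [hF]; exact Finset.mem_sdiff.mpr ⟨hjS, hj⟩
              rw [hF0] at this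
              simp at this
            rcases Finset.mem_union.mp hjTB with h | h
            · exact absurd h hjT
            · rw [hB, Finset.mem_filter] at h
              exact h.2
          · intro hcsub
            obtain ⟨-, hcov⟩ := of_cutnodes_subset hG hS hT hTne hcsub
            rw [Finset.eq_empty_iff_forall_notMem]
            intro j hj
            rw [hF, Finset.mem_sdiff] at hj
            obtain ⟨hjS, hjTB⟩ := hj
            have hjT : j ∉ T := fun h => hjTB (Finset.mem_union_left _ h)
            obtain ⟨t, htT, hadj⟩ := hcov j hjS hjT
            refine hjTB (Finset.mem_union_right _ ?_)
            rw [hB]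
            exact Finset.mem_filter.mpr ⟨Finset.mem_sdiff.mpr ⟨hjS, hjT⟩, t, htT, hadj⟩
        rw [mul_ite, mul_one, mul_zero, if_congr hFiff rfl rfl]
      · have h0 : ∀ R ∈ S.powerset,
            (-1:ℝ)^(S.card - R.card) * (if T ∈ R.image (comp G R) then v T else 0) = 0 := by
          intro R _
          rw [if_neg, mul_zero]
          intro hmem
          exact hTconn (mem_image_comp.mp hmem).2.1
        rw [Finset.sum_congr rfl h0, Finset.sum_const_zero, if_neg]
        intro hcsub
        exact hTconn (of_cutnodes_subset hG hS hT hTne hcsub).1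
end
end

section
/- The Shapley interaction index satisfies the dummy/null property for coalitions: if i is a null player in game w, then SI^w(S ∪ {i}) = 0 for all nonempty S ⊆ N∖{i}. -/
open Finset

noncomputable section
open scoped Classical

open TUGame

/-- the Shapley interaction index vanishes on coalitions
containing a null player (together with at least one other player). -/
theorem SI_null_player {ι : Type*} [Fintype ι] [DecidableEq ι]
    (w : Finset ι → ℝ) (i : ι) (h : NullPlayer w i)
    (S : Finset ι) (hS : S.Nonempty) (hiS : i ∉ S) :
    SIderiv w (insert i S) = 0 := by
  unfold SIderiv
  apply Finset.sum_eq_zero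
  intro T hT
  rw [Finset.mem_powerset] at hT
  have hiT : i ∉ T := by
    intro hi
    have := hT hi
    simp [Finset.mem_sdiff] at this
  rw [Finset.sum_powerset_insert hiS]
  have hinner : ∀ L ∈ S.powerset,
      ((-1 : ℝ) ^ ((insert i S).card - L.card) * w (T ∪ L) +
       (-1 : ℝ) ^ ((insert i S).card - (insert i L).card) * w (T ∪ insert i L)) = 0 := by
    intro L hL
    rw [Finset.mem_powerset] at hL
    have hiL : i ∉ L := fun hi => hiS (hL hi)
    have hcardS : (insert i S).card = S.card + 1 := Finset.card_insert_of_notMem hiS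
    have hcardL : (insert i L).card = L.card + 1 := Finset.card_insert_of_notMem hiL
    have hLS : L.card ≤ S.card := Finset.card_le_card hL
    have hw : w (T ∪ insert i L) = w (T ∪ L) := by
      have : T ∪ insert i L = insert i (T ∪ L) := by
        ext x; simp [Finset.mem_union, Finset.mem_insert]
      rw [this]
      exact h _ (by simp [hiT, hiL])
    rw [hw, hcardS, hcardL]
    have h1 : S.card + 1 - L.card = (S.card - L.card) + 1 := by omega
    have h2 : S.card + 1 - (L.card + 1) = S.card - L.card := by omega
    rw [h1, h2, pow_succ]
    ring
  rw [← Finset.sum_add_distrib] at *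
  rw [Finset.sum_eq_zero hinner, mul_zero]
end
end

section
/- The Myerson interaction index satisfies fairness: for any game v, graph Γ = (N,E), edge {i,j} ∈ E, and S ⊆ N∖{i,j}, MI^{v,Γ}(S ∪ {i}) − MI^{v,Γ_{−{i,j}}}(S ∪ {i}) = MI^{v,Γ}(S ∪ {j}) − MI^{v,Γ_{−{i,j}}}(S ∪ {j}), where Γ_{−{i,j}} is Γ with edge {i,j} removed. -/
open Finset

noncomputable section
open scoped Classical

open TUGame

section AuxFairness

variable {ι : Type*} [Fintype ι] [DecidableEq ι]

lemma restrict_deleteEdges_eq (G : SimpleGraph ι) (i j : ι) (R : Finset ι)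
    (h : ¬(i ∈ R ∧ j ∈ R)) :
    restrict (G.deleteEdges {s(i, j)}) R = restrict G R := by
  ext a b
  simp only [TUGame.restrict, SimpleGraph.deleteEdges_adj, Set.mem_singleton_iff]
  constructor
  · rintro ⟨⟨h1, _⟩, ha, hb⟩; exact ⟨h1, ha, hb⟩
  · rintro ⟨h1, ha, hb⟩
    refine ⟨⟨h1, fun he => ?_⟩, ha, hb⟩
    rw [Sym2.eq_iff] at he
    rcases he with ⟨rfl, rfl⟩ | ⟨rfl, rfl⟩
    · exact h ⟨ha, hb⟩
    · exact h ⟨hb, ha⟩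

lemma restrictedGame_deleteEdges_eq (G : SimpleGraph ι) (v : Finset ι → ℝ) (i j : ι)
    (R : Finset ι) (h : ¬(i ∈ R ∧ j ∈ R)) :
    restrictedGame (G.deleteEdges {s(i, j)}) v R = restrictedGame G v R := by
  unfold restrictedGame comp
  rw [restrict_deleteEdges_eq G i j R h]

lemma dividend_deleteEdges_eq (G : SimpleGraph ι) (v : Finset ι → ℝ) (i j : ι)
    (T : Finset ι) (h : i ∉ T ∨ j ∉ T) :
    dividend (restrictedGame (G.deleteEdges {s(i, j)}) v) T
      = dividend (restrictedGame G v) T := by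
  unfold dividend
  refine Finset.sum_congr rfl fun R hR => ?_
  rw [Finset.mem_powerset] at hR
  rw [restrictedGame_deleteEdges_eq G v i j R]
  rintro ⟨hiR, hjR⟩
  rcases h with h | h
  · exact h (hR hiR)
  · exact h (hR hjR)

lemma MI_sub_eq (G : SimpleGraph ι) (v : Finset ι → ℝ) (i j : ι) (A : Finset ι)
    (hjA : j ∉ A) :
    MI G v A - MI (G.deleteEdges {s(i, j)}) v A =
      ∑ T ∈ Finset.univ.powerset.filter (fun T => insert j A ⊆ T),
        (dividend (restrictedGame G v) T
          - dividend (restrictedGame (G.deleteEdges {s(i, j)}) v) T)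
          / ((T.card - A.card + 1 : ℕ) : ℝ) := by
  rw [MI, MI, SIdiv, SIdiv, ← Finset.sum_sub_distrib]
  rw [show (fun T => dividend (restrictedGame G v) T / ((T.card - A.card + 1 : ℕ) : ℝ)
      - dividend (restrictedGame (G.deleteEdges {s(i, j)}) v) T / ((T.card - A.card + 1 : ℕ) : ℝ))
      = fun T => (dividend (restrictedGame G v) T
        - dividend (restrictedGame (G.deleteEdges {s(i, j)}) v) T)
        / ((T.card - A.card + 1 : ℕ) : ℝ) from funext fun T => div_sub_div_same _ _ _]
  refine (Finset.sum_subset ?_ ?_).symm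
  · intro T hT
    simp only [Finset.mem_filter, Finset.mem_powerset] at hT ⊢
    exact ⟨hT.1, fun x hx => hT.2 (Finset.mem_insert_of_mem hx)⟩
  · intro T hT hT'
    simp only [Finset.mem_filter, Finset.mem_powerset] at hT hT'
    have hjT : j ∉ T := by
      intro hjT
      exact hT' ⟨hT.1, Finset.insert_subset hjT hT.2⟩
    rw [dividend_deleteEdges_eq G v i j T (Or.inr hjT), sub_self, zero_div]

end AuxFairness

/-- the Myerson interaction index satisfies fairness. -/
theorem MI_fairness {ι : Type*} [Fintype ι] [DecidableEq ι]
    (G : SimpleGraph ι) (v : Finset ι → ℝ) (i j : ι) (hij : G.Adj i j)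
    (S : Finset ι) (hi : i ∉ S) (hj : j ∉ S) :
    MI G v (insert i S) - MI (G.deleteEdges {s(i, j)}) v (insert i S) =
      MI G v (insert j S) - MI (G.deleteEdges {s(i, j)}) v (insert j S) := by
  have hne : i ≠ j := hij.ne
  have hsij : s(j, i) = s(i, j) := Sym2.eq_swap
  have h1 := MI_sub_eq G v i j (insert i S)
    (by simp [Finset.mem_insert, hne.symm, hj])
  have h2 := MI_sub_eq G v j i (insert j S)
    (by simp [Finset.mem_insert, hne, hi])
  rw [hsij] at h2
  rw [h1, h2]
  have hcard : (insert i S).card = (insert j S).card := by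
    rw [Finset.card_insert_of_notMem hi, Finset.card_insert_of_notMem hj]
  have hset : insert j (insert i S) = insert i (insert j S) := (Finset.insert_comm i j S).symm
  rw [hset, hcard]
end
end

section
/- If P is a partnership in game w (i.e., w(T ∪ S) = w(T) for all T ⊆ N∖P and all S ⊊ P), then the Harsanyi dividends satisfy Δ_w(L ∪ P) = Δ_{w_{[P]}}(L ∪ {[P]}) for every L ⊆ N∖P, where w_{[P]} is the quotient game replacing P by a single proxy player [P]. -/
open Finset

noncomputable section
open scoped Classical

open TUGame

private lemma neg_one_pow_sub_aux {n k : ℕ} (h : k ≤ n) :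
    ((-1 : ℝ)) ^ (n - k) = (-1) ^ n * (-1) ^ k := by
  have : (-1 : ℝ) ^ (n - k) * (-1) ^ k = (-1) ^ n := by
    rw [← pow_add, Nat.sub_add_cancel h]
  have hk : ((-1 : ℝ)) ^ k * (-1) ^ k = 1 := by
    rw [← pow_add, ← two_mul, pow_mul]; norm_num
  calc ((-1 : ℝ)) ^ (n - k) = (-1) ^ (n - k) * ((-1) ^ k * (-1) ^ k) := by rw [hk, mul_one]
    _ = ((-1 : ℝ) ^ (n - k) * (-1) ^ k) * (-1) ^ k := by ring
    _ = (-1) ^ n * (-1) ^ k := by rw [this]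

private lemma sum_powerset_union_aux {ι : Type*} [DecidableEq ι] (L : Finset ι) :
    ∀ (P : Finset ι), Disjoint L P → ∀ (f : Finset ι → ℝ),
    ∑ R ∈ (L ∪ P).powerset, f R = ∑ A ∈ L.powerset, ∑ B ∈ P.powerset, f (A ∪ B) := by
  intro P
  induction P using Finset.induction_on with
  | empty => intro _ f; simp
  | @insert a P ha ih =>
    intro hdisj f
    have hdLP : Disjoint L P := hdisj.mono_right (Finset.subset_insert a P)
    have haL : a ∉ L := fun h => (Finset.disjoint_left.mp hdisj h) (Finset.mem_insert_self a P)
    have haLP : a ∉ L ∪ P := by simp [haL, ha]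
    have hU : L ∪ insert a P = insert a (L ∪ P) := by
      ext x; simp [Finset.mem_insert, Finset.mem_union, or_left_comm, or_comm]
    rw [hU, Finset.sum_powerset_insert haLP, ih hdLP f, ih hdLP (fun t => f (insert a t))]
    rw [← Finset.sum_add_distrib]
    refine Finset.sum_congr rfl fun A hA => ?_
    rw [Finset.sum_powerset_insert ha]
    congr 1
    refine Finset.sum_congr rfl fun B _ => ?_
    congr 1
    ext x; simp [Finset.mem_insert, Finset.mem_union, or_left_comm]

private lemma alt_sum_zero_s17 {ι : Type*} [DecidableEq ι] {P : Finset ι} (h : P.Nonempty) :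
    ∑ B ∈ P.powerset, (-1 : ℝ) ^ (P.card - B.card) = 0 := by
  have h0 : (∑ B ∈ P.powerset, (-1 : ℤ) ^ B.card) = 0 :=
    Finset.sum_powerset_neg_one_pow_card_of_nonempty h
  have h1 : (∑ B ∈ P.powerset, (-1 : ℝ) ^ B.card) = 0 := by
    have := congrArg (fun z : ℤ => (z : ℝ)) h0
    push_cast at this
    exact this
  calc ∑ B ∈ P.powerset, (-1 : ℝ) ^ (P.card - B.card)
      = ∑ B ∈ P.powerset, (-1 : ℝ) ^ P.card * (-1) ^ B.card := by
        refine Finset.sum_congr rfl fun B hB => ?_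
        exact neg_one_pow_sub_aux (Finset.card_le_card (Finset.mem_powerset.mp hB))
    _ = (-1 : ℝ) ^ P.card * ∑ B ∈ P.powerset, (-1 : ℝ) ^ B.card := by
        rw [Finset.mul_sum]
    _ = 0 := by rw [h1, mul_zero]

/-- for a partnership `P`, the dividends of coalitions containing
`P` equal the dividends in the quotient game where `P` is replaced by the proxy
player `p ∈ P`. -/
theorem dividend_partnership_quotient {ι : Type*} [Fintype ι] [DecidableEq ι]
    (w : Finset ι → ℝ) (P : Finset ι) (hPne : P.Nonempty)
    (hP : ∀ T ⊆ Finset.univ \ P, ∀ S ⊂ P, w (T ∪ S) = w T)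
    (p : ι) (hp : p ∈ P) (L : Finset ι) (hL : L ⊆ Finset.univ \ P) :
    dividend w (L ∪ P) =
      dividend (fun S => if p ∈ S then w (S.erase p ∪ P) else w S) (insert p L) := by
  have hdisj : Disjoint L P := by
    rw [Finset.disjoint_left]
    intro x hxL hxP
    have := hL hxL
    rw [Finset.mem_sdiff] at this
    exact this.2 hxP
  have hpL : p ∉ L := fun h => Finset.disjoint_left.mp hdisj h hp
  have hcardU : (L ∪ P).card = L.card + P.card := Finset.card_union_of_disjoint hdisj
  have hcardI : (insert p L).card = L.card + 1 := Finset.card_insert_of_notMem hpL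
  rw [dividend, dividend, sum_powerset_union_aux L P hdisj, Finset.sum_powerset_insert hpL]
  have key : ∀ A ∈ L.powerset,
      ∑ B ∈ P.powerset, (-1:ℝ) ^ ((L ∪ P).card - (A ∪ B).card) * w (A ∪ B)
        = (-1:ℝ) ^ (L.card - A.card) * (w (A ∪ P) - w A) := by
    intro A hA
    have hAL : A ⊆ L := Finset.mem_powerset.mp hA
    have hAcard : A.card ≤ L.card := Finset.card_le_card hAL
    have hAuniv : A ⊆ Finset.univ \ P := hAL.trans hL
    have step1 : ∀ B ∈ P.powerset,
        (-1:ℝ) ^ ((L ∪ P).card - (A ∪ B).card) * w (A ∪ B)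
          = (-1:ℝ) ^ (L.card - A.card) * ((-1:ℝ) ^ (P.card - B.card) * w (A ∪ B)) := by
      intro B hB
      have hBP : B ⊆ P := Finset.mem_powerset.mp hB
      have hBcard : B.card ≤ P.card := Finset.card_le_card hBP
      have hdAB : Disjoint A B := hdisj.mono hAL hBP
      have hc : (A ∪ B).card = A.card + B.card := Finset.card_union_of_disjoint hdAB
      rw [hc, hcardU]
      have he : L.card + P.card - (A.card + B.card)
          = (L.card - A.card) + (P.card - B.card) := by omega
      rw [he, pow_add, mul_assoc]
    rw [Finset.sum_congr rfl step1, ← Finset.mul_sum]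
    congr 1
    have split : ∀ B ∈ P.powerset,
        (-1:ℝ) ^ (P.card - B.card) * w (A ∪ B)
          = (-1:ℝ) ^ (P.card - B.card) * w A
            + (if B = P then w (A ∪ P) - w A else 0) := by
      intro B hB
      have hBP : B ⊆ P := Finset.mem_powerset.mp hB
      by_cases hBeq : B = P
      · subst hBeq
        simp [Nat.sub_self]
      · have hBss : B ⊂ P := hBP.ssubset_of_ne hBeq
        rw [hP A hAuniv B hBss, if_neg hBeq, add_zero]
    rw [Finset.sum_congr rfl split, Finset.sum_add_distrib, ← Finset.sum_mul,
      alt_sum_zero_s17 hPne, zero_mul, zero_add]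
    rw [Finset.sum_ite_eq' P.powerset P (fun _ => w (A ∪ P) - w A)]
    simp [Finset.mem_powerset]
  rw [Finset.sum_congr rfl key]
  rw [← Finset.sum_add_distrib]
  refine Finset.sum_congr rfl fun A hA => ?_
  have hAL : A ⊆ L := Finset.mem_powerset.mp hA
  have hAcard : A.card ≤ L.card := Finset.card_le_card hAL
  have hpA : p ∉ A := fun h => hpL (hAL h)
  rw [if_neg hpA, if_pos (Finset.mem_insert_self p A), Finset.erase_insert hpA,
    hcardI, Finset.card_insert_of_notMem hpA]
  have e1 : L.card + 1 - A.card = (L.card - A.card) + 1 := by omega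
  have e2 : L.card + 1 - (A.card + 1) = L.card - A.card := by omega
  rw [e1, e2, pow_succ]
  ring
end
end
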